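/- arXiv:0904.4386 — 3 statements merged into one kernel-verified Lean document; each statement's English description precedes it below -/
import Mathlib

section
/- Let d ≥ 1 be an integer. Let φ ∈ L¹(ℝ^d) ∩ L^∞(ℝ^d) be nonnegative, and let k : ℝ^d × ℝ^d → ℝ be measurable with k(x,y) = k(y,x) and 0 ≤ k(x,y) ≤ φ(y − x) for all x, y ∈ ℝ^d. If ∫_{ℝ^d} k(x,y) dy → 0 as |x| → ∞, then the integral operator K f(x) = ∫_{ℝ^d} k(x,y) f(y) dy is a well-defined bounded linear operator on L²(ℝ^d, Lebesgue measure) and K is a compact operator. -/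
open MeasureTheory Filter

open MeasureTheory Filter ENNReal Set Topology

set_option synthInstance.maxHeartbeats 1000000
set_option maxHeartbeats 1000000

noncomputable section
namespace Stmt5Aux

variable {α : Type*} [MeasurableSpace α] {μ : Measure α} [SigmaFinite μ]
lemma lintegral_CS (a b : α → ℝ≥0∞) (ha : AEMeasurable a μ) (hb : AEMeasurable b μ) :
    (∫⁻ x, a x * b x ∂μ) ^ (2:ℝ) ≤ (∫⁻ x, a x ^ (2:ℝ) ∂μ) * (∫⁻ x, b x ^ (2:ℝ) ∂μ) := by
  have hconj : (2:ℝ).HolderConjugate 2 := Real.HolderConjugate.two_two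
  have h := ENNReal.lintegral_mul_le_Lp_mul_Lq μ hconj ha hb
  calc (∫⁻ x, a x * b x ∂μ) ^ (2:ℝ)
      ≤ ((∫⁻ x, a x ^ (2:ℝ) ∂μ) ^ (1/2:ℝ) * (∫⁻ x, b x ^ (2:ℝ) ∂μ) ^ (1/2:ℝ)) ^ (2:ℝ) := by
        gcongr
        simpa using h
    _ = (∫⁻ x, a x ^ (2:ℝ) ∂μ) * (∫⁻ x, b x ^ (2:ℝ) ∂μ) := by
        rw [ENNReal.mul_rpow_of_nonneg _ _ (by norm_num : (0:ℝ) ≤ 2),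
          ← ENNReal.rpow_mul, ← ENNReal.rpow_mul]
        norm_num

theorem exists_kernelOp
    (g : α → α → ℝ) (hg : AEStronglyMeasurable (Function.uncurry g) (μ.prod μ))
    (C : ℝ≥0∞) (hC : C ≠ ∞)
    (HB : ∀ f : α → ℝ, Measurable f →
      ∫⁻ x, (∫⁻ y, (‖g x y‖₊ : ℝ≥0∞) * ‖f y‖₊ ∂μ) ^ (2:ℝ) ∂μ
        ≤ C ^ (2:ℝ) * ∫⁻ y, (‖f y‖₊ : ℝ≥0∞) ^ (2:ℝ) ∂μ) :
    ∃ K : Lp ℝ 2 μ →L[ℝ] Lp ℝ 2 μ, ‖K‖ ≤ C.toReal ∧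
      ∀ f : Lp ℝ 2 μ,
        (∀ᵐ x ∂μ, Integrable (fun y => g x y * f y) μ) ∧
        (⇑(K f) =ᵐ[μ] fun x => ∫ y, g x y * f y ∂μ) := by
  classical
  have hg2 : ∀ f : Lp ℝ 2 μ,
      AEStronglyMeasurable (fun z : α × α => g z.1 z.2 * (f : α → ℝ) z.2) (μ.prod μ) :=
    fun f => hg.mul ((Lp.aestronglyMeasurable f).comp_snd)
  have hJm : ∀ f : Lp ℝ 2 μ,
      AEMeasurable (fun x => ∫⁻ y, (‖g x y‖₊ : ℝ≥0∞) * ‖(f:α→ℝ) y‖₊ ∂μ) μ := by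
    intro f
    have hF : AEMeasurable (fun z : α × α => (‖g z.1 z.2‖₊ : ℝ≥0∞) * ‖(f:α→ℝ) z.2‖₊)
        (μ.prod μ) := hg.enorm.mul ((Lp.aestronglyMeasurable f).comp_snd.enorm)
    refine ⟨fun x => ∫⁻ y, hF.mk _ (x, y) ∂μ, hF.measurable_mk.lintegral_prod_right', ?_⟩
    filter_upwards [Measure.ae_ae_of_ae_prod hF.ae_eq_mk] with x hx
    exact lintegral_congr_ae hx
  have hb1 : ∀ f : Lp ℝ 2 μ,
      ∫⁻ x, (∫⁻ y, (‖g x y‖₊:ℝ≥0∞) * ‖(f:α→ℝ) y‖₊ ∂μ) ^ (2:ℝ) ∂μ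
        ≤ C ^ (2:ℝ) * ∫⁻ y, (‖(f:α→ℝ) y‖₊:ℝ≥0∞) ^ (2:ℝ) ∂μ := by
    intro f
    have hfm := (Lp.aestronglyMeasurable f).aemeasurable
    have hff' := hfm.ae_eq_mk
    have h1 : ∀ x, ∫⁻ y, (‖g x y‖₊:ℝ≥0∞) * ‖(f:α→ℝ) y‖₊ ∂μ
        = ∫⁻ y, (‖g x y‖₊:ℝ≥0∞) * ‖hfm.mk _ y‖₊ ∂μ := by
      intro x; apply lintegral_congr_ae
      filter_upwards [hff'] with y hy; rw [hy]
    have h2 : ∫⁻ y, (‖(f:α→ℝ) y‖₊:ℝ≥0∞) ^ (2:ℝ) ∂μ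
        = ∫⁻ y, (‖hfm.mk _ y‖₊:ℝ≥0∞) ^ (2:ℝ) ∂μ := by
      apply lintegral_congr_ae; filter_upwards [hff'] with y hy; rw [hy]
    simp only [h1, h2]
    exact HB _ hfm.measurable_mk
  have hfin : ∀ f : Lp ℝ 2 μ,
      ∫⁻ y, (‖(f:α→ℝ) y‖₊:ℝ≥0∞) ^ (2:ℝ) ∂μ = (eLpNorm (f:α→ℝ) 2 μ) ^ (2:ℝ) := by
    intro f
    rw [eLpNorm_eq_lintegral_rpow_enorm_toReal (by norm_num) (by norm_num), ← ENNReal.rpow_mul]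
    norm_num
    simp only [enorm_eq_nnnorm]
  have hmem : ∀ f : Lp ℝ 2 μ, MemLp (fun x => ∫ y, g x y * (f:α→ℝ) y ∂μ) 2 μ ∧
      eLpNorm (fun x => ∫ y, g x y * (f:α→ℝ) y ∂μ) 2 μ ≤ C * eLpNorm (f:α→ℝ) 2 μ := by
    intro f
    have hTm : AEStronglyMeasurable (fun x => ∫ y, g x y * (f:α→ℝ) y ∂μ) μ :=
      (hg2 f).integral_prod_right'
    have hpt : ∀ x, (‖∫ y, g x y * (f:α→ℝ) y ∂μ‖₊ : ℝ≥0∞)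
        ≤ ∫⁻ y, (‖g x y‖₊:ℝ≥0∞) * ‖(f:α→ℝ) y‖₊ ∂μ := by
      intro x
      refine le_trans (enorm_integral_le_lintegral_enorm _) (le_of_eq ?_)
      simp_rw [enorm_mul, enorm_eq_nnnorm]
    have hsn : eLpNorm (fun x => ∫ y, g x y * (f:α→ℝ) y ∂μ) 2 μ ≤ C * eLpNorm (f:α→ℝ) 2 μ := by
      rw [eLpNorm_eq_lintegral_rpow_enorm_toReal (by norm_num) (by norm_num)]
      have h2 : ((2:ℝ≥0∞)).toReal = (2:ℝ) := by norm_num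
      rw [h2]
      calc (∫⁻ x, (‖∫ y, g x y * (f:α→ℝ) y ∂μ‖₊ : ℝ≥0∞) ^ (2:ℝ) ∂μ) ^ (1/2:ℝ)
          ≤ (∫⁻ x, (∫⁻ y, (‖g x y‖₊:ℝ≥0∞) * ‖(f:α→ℝ) y‖₊ ∂μ) ^ (2:ℝ) ∂μ) ^ (1/2:ℝ) := by
            gcongr with x
            exact hpt x
        _ ≤ (C ^ (2:ℝ) * ∫⁻ y, (‖(f:α→ℝ) y‖₊:ℝ≥0∞) ^ (2:ℝ) ∂μ) ^ (1/2:ℝ) := by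
            gcongr
            exact hb1 f
        _ = C * eLpNorm (f:α→ℝ) 2 μ := by
            rw [hfin f, ENNReal.mul_rpow_of_nonneg _ _ (by norm_num : (0:ℝ) ≤ 1/2),
              ← ENNReal.rpow_mul, ← ENNReal.rpow_mul]
            norm_num
    refine ⟨⟨hTm, lt_of_le_of_lt hsn ?_⟩, hsn⟩
    exact ENNReal.mul_lt_top hC.lt_top (Lp.eLpNorm_lt_top f)
  have hIntAE : ∀ f : Lp ℝ 2 μ, ∀ᵐ x ∂μ, Integrable (fun y => g x y * (f:α→ℝ) y) μ := by
    intro f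
    have hne : ∫⁻ x, (∫⁻ y, (‖g x y‖₊:ℝ≥0∞) * ‖(f:α→ℝ) y‖₊ ∂μ) ^ (2:ℝ) ∂μ ≠ ∞ := by
      refine ne_of_lt (lt_of_le_of_lt (hb1 f) ?_)
      rw [hfin f]
      exact ENNReal.mul_lt_top (ENNReal.rpow_lt_top_of_nonneg (by norm_num) hC).lt_top
        (ENNReal.rpow_lt_top_of_nonneg (by norm_num) (Lp.eLpNorm_ne_top f))
    have hJfin : ∀ᵐ x ∂μ, (∫⁻ y, (‖g x y‖₊:ℝ≥0∞) * ‖(f:α→ℝ) y‖₊ ∂μ) ^ (2:ℝ) < ∞ :=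
      ae_lt_top' ((hJm f).pow_const _) hne
    filter_upwards [hJfin, (hg2 f).prodMk_left] with x hx hxm
    refine ⟨hxm, ?_⟩
    have hJx : ∫⁻ y, (‖g x y‖₊:ℝ≥0∞) * ‖(f:α→ℝ) y‖₊ ∂μ < ∞ := by
      by_contra h
      rw [not_lt, top_le_iff] at h
      rw [h] at hx
      simp [ENNReal.top_rpow_of_pos (by norm_num : (0:ℝ) < 2)] at hx
    refine lt_of_le_of_lt (le_of_eq ?_) hJx
    simp_rw [enorm_mul, enorm_eq_nnnorm]
  set T : Lp ℝ 2 μ → α → ℝ := fun f x => ∫ y, g x y * (f:α→ℝ) y ∂μ with hT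
  have hadd : ∀ f h : Lp ℝ 2 μ, T (f + h) =ᵐ[μ] T f + T h := by
    intro f h
    have hc : (⇑(f+h) : α → ℝ) =ᵐ[μ] ⇑f + ⇑h := Lp.coeFn_add f h
    filter_upwards [hIntAE f, hIntAE h] with x hxf hxh
    have h1 : T (f+h) x = ∫ y, (g x y * (f:α→ℝ) y + g x y * (h:α→ℝ) y) ∂μ := by
      apply integral_congr_ae
      filter_upwards [hc] with y hy
      rw [hy]
      simp [mul_add]
    rw [h1, integral_add hxf hxh]
    rfl
  have hsmul : ∀ (c : ℝ) (f : Lp ℝ 2 μ), T (c • f) =ᵐ[μ] c • T f := by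
    intro c f
    have hc := Lp.coeFn_smul c f
    refine Eventually.of_forall fun x => ?_
    have h1 : T (c • f) x = ∫ y, c * (g x y * (f:α→ℝ) y) ∂μ := by
      apply integral_congr_ae
      filter_upwards [hc] with y hy
      rw [hy]
      simp [Pi.smul_apply, smul_eq_mul]; ring
    rw [h1, integral_const_mul]
    rfl
  set L : Lp ℝ 2 μ →ₗ[ℝ] Lp ℝ 2 μ :=
    { toFun := fun f => ((hmem f).1).toLp (T f)
      map_add' := fun f h => by
        rw [← MemLp.toLp_add (hmem f).1 (hmem h).1]
        exact MemLp.toLp_congr _ _ (hadd f h)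
      map_smul' := fun c f => by
        simp only [RingHom.id_apply]
        rw [← MemLp.toLp_const_smul c (hmem f).1]
        exact MemLp.toLp_congr _ _ (hsmul c f) } with hL
  have hbd : ∀ f : Lp ℝ 2 μ, ‖L f‖ ≤ C.toReal * ‖f‖ := by
    intro f
    have h1 : ‖L f‖ = (eLpNorm (T f) 2 μ).toReal := Lp.norm_toLp (T f) (hmem f).1
    rw [h1, Lp.norm_def, ← ENNReal.toReal_mul]
    exact ENNReal.toReal_mono (ENNReal.mul_ne_top hC (Lp.eLpNorm_ne_top f)) ((hmem f).2)
  refine ⟨L.mkContinuous C.toReal hbd,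
    LinearMap.mkContinuous_norm_le _ ENNReal.toReal_nonneg _, fun f => ⟨hIntAE f, ?_⟩⟩
  have hKf : (L.mkContinuous C.toReal hbd) f = ((hmem f).1).toLp (T f) := rfl
  rw [hKf]
  exact MemLp.coeFn_toLp (hmem f).1

lemma aemeasurable_lintegral_right {F : α × α → ℝ≥0∞} (hF : AEMeasurable F (μ.prod μ)) :
    AEMeasurable (fun x => ∫⁻ y, F (x, y) ∂μ) μ := by
  refine ⟨fun x => ∫⁻ y, hF.mk _ (x, y) ∂μ, hF.measurable_mk.lintegral_prod_right', ?_⟩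
  filter_upwards [Measure.ae_ae_of_ae_prod hF.ae_eq_mk] with x hx
  exact lintegral_congr_ae hx

lemma schur_HB (g : α → α → ℝ)
    (hg : AEStronglyMeasurable (Function.uncurry g) (μ.prod μ))
    (A B : ℝ≥0∞)
    (hA : ∀ x, ∫⁻ y, (‖g x y‖₊ : ℝ≥0∞) ∂μ ≤ A)
    (hB : ∀ y, ∫⁻ x, (‖g x y‖₊ : ℝ≥0∞) ∂μ ≤ B)
    (f : α → ℝ) (hf : Measurable f) :
    ∫⁻ x, (∫⁻ y, (‖g x y‖₊ : ℝ≥0∞) * ‖f y‖₊ ∂μ) ^ (2:ℝ) ∂μ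
      ≤ (A * B) * ∫⁻ y, (‖f y‖₊ : ℝ≥0∞) ^ (2:ℝ) ∂μ := by
  have hκ : AEMeasurable (fun z : α × α => (‖g z.1 z.2‖₊ : ℝ≥0∞)) (μ.prod μ) := hg.enorm
  have hfe : Measurable fun y => (‖f y‖₊ : ℝ≥0∞) := hf.nnnorm.coe_nnreal_ennreal
  have hsl : ∀ᵐ x ∂μ, AEMeasurable (fun y => (‖g x y‖₊ : ℝ≥0∞)) μ := by
    filter_upwards [hg.prodMk_left] with x hx using hx.enorm
  have step1 : ∀ᵐ x ∂μ, (∫⁻ y, (‖g x y‖₊ : ℝ≥0∞) * ‖f y‖₊ ∂μ) ^ (2:ℝ)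
      ≤ A * ∫⁻ y, (‖g x y‖₊ : ℝ≥0∞) * (‖f y‖₊ : ℝ≥0∞) ^ (2:ℝ) ∂μ := by
    filter_upwards [hsl] with x hx
    have hCS := lintegral_CS (fun y => (‖g x y‖₊ : ℝ≥0∞) ^ (1/2:ℝ))
      (fun y => (‖g x y‖₊ : ℝ≥0∞) ^ (1/2:ℝ) * ‖f y‖₊)
      (hx.pow_const _) ((hx.pow_const _).mul hfe.aemeasurable)
    have e1 : ∀ y, (‖g x y‖₊ : ℝ≥0∞) ^ (1/2:ℝ) * ((‖g x y‖₊ : ℝ≥0∞) ^ (1/2:ℝ) * ‖f y‖₊)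
        = (‖g x y‖₊ : ℝ≥0∞) * ‖f y‖₊ := by
      intro y
      rw [← mul_assoc, ← ENNReal.rpow_add_of_nonneg _ _ (by norm_num) (by norm_num)]
      norm_num
    have e2 : ∀ y : α, ((‖g x y‖₊ : ℝ≥0∞) ^ (1/2:ℝ)) ^ (2:ℝ) = (‖g x y‖₊ : ℝ≥0∞) := by
      intro y; rw [← ENNReal.rpow_mul]; norm_num
    have e3 : ∀ y, ((‖g x y‖₊ : ℝ≥0∞) ^ (1/2:ℝ) * (‖f y‖₊ : ℝ≥0∞)) ^ (2:ℝ)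
        = (‖g x y‖₊ : ℝ≥0∞) * (‖f y‖₊ : ℝ≥0∞) ^ (2:ℝ) := by
      intro y
      rw [ENNReal.mul_rpow_of_nonneg _ _ (by norm_num : (0:ℝ) ≤ 2)]
      rw [← ENNReal.rpow_mul]
      norm_num
    simp only [e1, e2, e3] at hCS
    exact le_trans hCS (mul_le_mul_left (hA x) _)
  have hprodmeas : AEMeasurable
      (fun z : α × α => (‖g z.1 z.2‖₊ : ℝ≥0∞) * (‖f z.2‖₊ : ℝ≥0∞) ^ (2:ℝ)) (μ.prod μ) :=
    hκ.mul ((hfe.comp measurable_snd).pow_const _).aemeasurable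
  calc ∫⁻ x, (∫⁻ y, (‖g x y‖₊ : ℝ≥0∞) * ‖f y‖₊ ∂μ) ^ (2:ℝ) ∂μ
      ≤ ∫⁻ x, A * ∫⁻ y, (‖g x y‖₊ : ℝ≥0∞) * (‖f y‖₊ : ℝ≥0∞) ^ (2:ℝ) ∂μ ∂μ :=
        lintegral_mono_ae step1
    _ = A * ∫⁻ x, ∫⁻ y, (‖g x y‖₊ : ℝ≥0∞) * (‖f y‖₊ : ℝ≥0∞) ^ (2:ℝ) ∂μ ∂μ :=
        lintegral_const_mul'' A (aemeasurable_lintegral_right hprodmeas)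
    _ = A * ∫⁻ y, ∫⁻ x, (‖g x y‖₊ : ℝ≥0∞) * (‖f y‖₊ : ℝ≥0∞) ^ (2:ℝ) ∂μ ∂μ := by
        rw [lintegral_lintegral_swap hprodmeas]
    _ = A * ∫⁻ y, (∫⁻ x, (‖g x y‖₊ : ℝ≥0∞) ∂μ) * (‖f y‖₊ : ℝ≥0∞) ^ (2:ℝ) ∂μ := by
        congr 1
        refine lintegral_congr fun y => ?_
        exact lintegral_mul_const' _ _ (by
          exact ENNReal.rpow_lt_top_of_nonneg (by norm_num) ENNReal.coe_ne_top |>.ne)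
    _ ≤ A * ∫⁻ y, B * (‖f y‖₊ : ℝ≥0∞) ^ (2:ℝ) ∂μ := by
        gcongr with y
        exact hB y
    _ = (A * B) * ∫⁻ y, (‖f y‖₊ : ℝ≥0∞) ^ (2:ℝ) ∂μ := by
        rw [lintegral_const_mul B (hfe.pow_const _), mul_assoc]

lemma hs_HB (g : α → α → ℝ)
    (hg : AEStronglyMeasurable (Function.uncurry g) (μ.prod μ))
    (f : α → ℝ) (hf : Measurable f) :
    ∫⁻ x, (∫⁻ y, (‖g x y‖₊ : ℝ≥0∞) * ‖f y‖₊ ∂μ) ^ (2:ℝ) ∂μ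
      ≤ (∫⁻ z : α × α, (‖g z.1 z.2‖₊ : ℝ≥0∞) ^ (2:ℝ) ∂(μ.prod μ))
          * ∫⁻ y, (‖f y‖₊ : ℝ≥0∞) ^ (2:ℝ) ∂μ := by
  have hκ2 : AEMeasurable (fun z : α × α => (‖g z.1 z.2‖₊ : ℝ≥0∞) ^ (2:ℝ)) (μ.prod μ) :=
    hg.enorm.pow_const _
  have hfe : Measurable fun y => (‖f y‖₊ : ℝ≥0∞) := hf.nnnorm.coe_nnreal_ennreal
  have hsl : ∀ᵐ x ∂μ, AEMeasurable (fun y => (‖g x y‖₊ : ℝ≥0∞)) μ := by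
    filter_upwards [hg.prodMk_left] with x hx using hx.enorm
  have step1 : ∀ᵐ x ∂μ, (∫⁻ y, (‖g x y‖₊ : ℝ≥0∞) * ‖f y‖₊ ∂μ) ^ (2:ℝ)
      ≤ (∫⁻ y, (‖g x y‖₊ : ℝ≥0∞) ^ (2:ℝ) ∂μ) * ∫⁻ y, (‖f y‖₊ : ℝ≥0∞) ^ (2:ℝ) ∂μ := by
    filter_upwards [hsl] with x hx
    exact lintegral_CS _ _ hx hfe.aemeasurable
  calc ∫⁻ x, (∫⁻ y, (‖g x y‖₊ : ℝ≥0∞) * ‖f y‖₊ ∂μ) ^ (2:ℝ) ∂μ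
      ≤ ∫⁻ x, (∫⁻ y, (‖g x y‖₊ : ℝ≥0∞) ^ (2:ℝ) ∂μ) * ∫⁻ y, (‖f y‖₊ : ℝ≥0∞) ^ (2:ℝ) ∂μ ∂μ :=
        lintegral_mono_ae step1
    _ = (∫⁻ x, ∫⁻ y, (‖g x y‖₊ : ℝ≥0∞) ^ (2:ℝ) ∂μ ∂μ) * ∫⁻ y, (‖f y‖₊ : ℝ≥0∞) ^ (2:ℝ) ∂μ :=
        lintegral_mul_const'' _ (aemeasurable_lintegral_right hκ2)
    _ = (∫⁻ z : α × α, (‖g z.1 z.2‖₊ : ℝ≥0∞) ^ (2:ℝ) ∂(μ.prod μ))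
          * ∫⁻ y, (‖f y‖₊ : ℝ≥0∞) ^ (2:ℝ) ∂μ := by
        rw [MeasureTheory.lintegral_prod _ hκ2]

lemma lintegral_nnnorm_sq_eq {β : Type*} [MeasurableSpace β] (m : Measure β) (f : β → ℝ) :
    ∫⁻ x, (‖f x‖₊ : ℝ≥0∞) ^ (2:ℝ) ∂m = (eLpNorm f 2 m) ^ (2:ℝ) := by
  rw [eLpNorm_eq_lintegral_rpow_enorm_toReal (by norm_num) (by norm_num), ← ENNReal.rpow_mul]
  norm_num
  simp only [enorm_eq_nnnorm]

lemma isCompactOperator_smulRight {M₁ M₂ : Type*} [NormedAddCommGroup M₁] [NormedSpace ℝ M₁]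
    [NormedAddCommGroup M₂] [NormedSpace ℝ M₂] (L : M₁ →L[ℝ] ℝ) (v : M₂) :
    IsCompactOperator ⇑(L.smulRight v) := by
  refine ⟨(fun t : ℝ => t • v) '' (Icc (-(‖L‖+1)) (‖L‖+1)),
    isCompact_Icc.image (continuous_id.smul continuous_const), ?_⟩
  refine Filter.mem_of_superset (Metric.ball_mem_nhds (0:M₁) one_pos) ?_
  intro f hf
  refine ⟨L f, ?_, rfl⟩
  have h1 : ‖L f‖ ≤ ‖L‖ := by
    calc ‖L f‖ ≤ ‖L‖ * ‖f‖ := L.le_opNorm f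
    _ ≤ ‖L‖ * 1 := by
        gcongr
        exact le_of_lt (by simpa using hf)
    _ = ‖L‖ := mul_one _
  rw [Real.norm_eq_abs, abs_le] at h1
  constructor <;> [linarith [h1.1]; linarith [h1.2]]


variable (μ) in
theorem hsOp_exists (G : Lp ℝ 2 (μ.prod μ)) :
    ∃ K : Lp ℝ 2 μ →L[ℝ] Lp ℝ 2 μ, ‖K‖ ≤ ‖G‖ ∧ ∀ f : Lp ℝ 2 μ,
      (∀ᵐ x ∂μ, Integrable (fun y => (G : α × α → ℝ) (x, y) * f y) μ) ∧
      ⇑(K f) =ᵐ[μ] fun x => ∫ y, (G : α × α → ℝ) (x, y) * f y ∂μ := by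
  have hg : AEStronglyMeasurable
      (Function.uncurry fun x y => (G : α × α → ℝ) (x, y)) (μ.prod μ) :=
    Lp.aestronglyMeasurable G
  set C := eLpNorm (G : α × α → ℝ) 2 (μ.prod μ) with hCdef
  have hC : C ≠ ∞ := Lp.eLpNorm_ne_top G
  have hQ : ∫⁻ z : α × α, (‖(G : α × α → ℝ) z‖₊ : ℝ≥0∞) ^ (2:ℝ) ∂(μ.prod μ) = C ^ (2:ℝ) :=
    lintegral_nnnorm_sq_eq _ _
  obtain ⟨K, hK1, hK2⟩ := exists_kernelOp (fun x y => (G : α × α → ℝ) (x, y)) hg C hC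
    (fun f hf => by
      refine le_trans (hs_HB (fun x y => (G : α × α → ℝ) (x, y)) hg f hf) (le_of_eq ?_)
      rw [← hQ])
  refine ⟨K, ?_, hK2⟩
  rw [Lp.norm_def]
  exact hK1

variable (μ) in
def hsOp (G : Lp ℝ 2 (μ.prod μ)) : Lp ℝ 2 μ →L[ℝ] Lp ℝ 2 μ :=
  (hsOp_exists μ G).choose

lemma hsOp_norm (G : Lp ℝ 2 (μ.prod μ)) : ‖hsOp μ G‖ ≤ ‖G‖ :=
  (hsOp_exists μ G).choose_spec.1

lemma hsOp_int (G : Lp ℝ 2 (μ.prod μ)) (f : Lp ℝ 2 μ) :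
    ∀ᵐ x ∂μ, Integrable (fun y => (G : α × α → ℝ) (x, y) * f y) μ :=
  ((hsOp_exists μ G).choose_spec.2 f).1

lemma hsOp_ae (G : Lp ℝ 2 (μ.prod μ)) (f : Lp ℝ 2 μ) :
    ⇑(hsOp μ G f) =ᵐ[μ] fun x => ∫ y, (G : α × α → ℝ) (x, y) * f y ∂μ :=
  ((hsOp_exists μ G).choose_spec.2 f).2

lemma hsOp_add (G H : Lp ℝ 2 (μ.prod μ)) : hsOp μ (G + H) = hsOp μ G + hsOp μ H := by
  ext f
  have hc : (⇑(G + H) : α × α → ℝ) =ᵐ[μ.prod μ] ⇑G + ⇑H := Lp.coeFn_add G H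
  filter_upwards [hsOp_ae (G + H) f, hsOp_ae G f, hsOp_ae H f,
    Measure.ae_ae_of_ae_prod hc, hsOp_int G f, hsOp_int H f,
    Lp.coeFn_add (hsOp μ G f) (hsOp μ H f)] with x h1 h2 h3 hx hiG hiH hadd
  have e1 : ∫ y, (⇑(G + H) : α × α → ℝ) (x, y) * f y ∂μ
      = ∫ y, ((G : α × α → ℝ) (x, y) * f y + (H : α × α → ℝ) (x, y) * f y) ∂μ := by
    apply integral_congr_ae
    filter_upwards [hx] with y hy
    rw [hy]
    simp [add_mul]
  rw [h1, e1, integral_add hiG hiH, ContinuousLinearMap.add_apply, hadd, Pi.add_apply, h2, h3]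

lemma hsOp_smul (c : ℝ) (G : Lp ℝ 2 (μ.prod μ)) : hsOp μ (c • G) = c • hsOp μ G := by
  ext f
  have hc : (⇑(c • G) : α × α → ℝ) =ᵐ[μ.prod μ] c • ⇑G := Lp.coeFn_smul c G
  filter_upwards [hsOp_ae (c • G) f, hsOp_ae G f, Measure.ae_ae_of_ae_prod hc,
    Lp.coeFn_smul c (hsOp μ G f)] with x h1 h2 hx hsm
  have e1 : ∫ y, (⇑(c • G) : α × α → ℝ) (x, y) * f y ∂μ
      = ∫ y, c * ((G : α × α → ℝ) (x, y) * f y) ∂μ := by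
    apply integral_congr_ae
    filter_upwards [hx] with y hy
    rw [hy]
    simp [mul_assoc]
  rw [h1, e1, integral_const_mul, ContinuousLinearMap.smul_apply, hsm, Pi.smul_apply, h2, smul_eq_mul]

lemma hsOp_zero : hsOp μ (0 : Lp ℝ 2 (μ.prod μ)) = 0 := by
  have := hsOp_smul (0:ℝ) (0 : Lp ℝ 2 (μ.prod μ))
  simpa using this

lemma hsOp_sub (G H : Lp ℝ 2 (μ.prod μ)) : hsOp μ (G - H) = hsOp μ G - hsOp μ H := by
  have h := hsOp_add (G - H) H
  rw [sub_add_cancel] at h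
  rw [h]
  abel

lemma eq_zero_of_forall_rect (G : Lp ℝ 2 (μ.prod μ))
    (h : ∀ (A B : Set α), MeasurableSet A → MeasurableSet B → μ A ≠ ∞ → μ B ≠ ∞ →
      ∫ z in A ×ˢ B, (G : α × α → ℝ) z ∂(μ.prod μ) = 0) :
    G = 0 := by
  have hGmeas : ∀ n : ℕ, MeasurableSet (spanningSets μ n ×ˢ spanningSets μ n) := fun n =>
    (measurableSet_spanningSets μ n).prod (measurableSet_spanningSets μ n)
  have hrect0 : ∀ n : ℕ, ∀ A B : Set α, MeasurableSet A → MeasurableSet B →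
      ∫ z in A ×ˢ B, (G : α × α → ℝ) z
        ∂((μ.prod μ).restrict (spanningSets μ n ×ˢ spanningSets μ n)) = 0 := by
    intro n A B hA hB
    rw [Measure.restrict_restrict (hA.prod hB), Set.prod_inter_prod]
    refine h _ _ (hA.inter (measurableSet_spanningSets μ n))
      (hB.inter (measurableSet_spanningSets μ n)) ?_ ?_
    · exact ((measure_mono inter_subset_right).trans_lt (measure_spanningSets_lt_top μ n)).ne
    · exact ((measure_mono inter_subset_right).trans_lt (measure_spanningSets_lt_top μ n)).ne
  have key : ∀ n : ℕ,
      (⇑G : α × α → ℝ) =ᵐ[(μ.prod μ).restrict (spanningSets μ n ×ˢ spanningSets μ n)] 0 := by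
    intro n
    have hfin : IsFiniteMeasure ((μ.prod μ).restrict (spanningSets μ n ×ˢ spanningSets μ n)) := by
      constructor
      rw [Measure.restrict_apply_univ, Measure.prod_prod]
      exact ENNReal.mul_lt_top (measure_spanningSets_lt_top μ n) (measure_spanningSets_lt_top μ n)
    have hGint : Integrable (⇑G : α × α → ℝ)
        ((μ.prod μ).restrict (spanningSets μ n ×ˢ spanningSets μ n)) :=
      ((Lp.memLp G).restrict _).integrable (by norm_num)
    have hall : ∀ t : Set (α × α), MeasurableSet t →
        ∫ z in t, (G : α × α → ℝ) z
          ∂((μ.prod μ).restrict (spanningSets μ n ×ˢ spanningSets μ n)) = 0 := by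
      intro t ht
      refine MeasurableSpace.induction_on_inter
        (C := fun t _ => ∫ z in t, (G : α × α → ℝ) z
          ∂((μ.prod μ).restrict (spanningSets μ n ×ˢ spanningSets μ n)) = 0)
        generateFrom_prod.symm isPiSystem_prod ?_ ?_ ?_ ?_ t ht
      · simp
      · rintro t ⟨A, hA, B, hB, rfl⟩
        exact hrect0 n A B hA hB
      · intro t htm h0
        have htot := integral_add_compl htm hGint
        have huniv : ∫ z, (G : α × α → ℝ) z
            ∂((μ.prod μ).restrict (spanningSets μ n ×ˢ spanningSets μ n)) = 0 := by
          rw [← setIntegral_univ, ← Set.univ_prod_univ]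
          exact hrect0 n univ univ MeasurableSet.univ MeasurableSet.univ
        rw [h0, huniv] at htot
        linarith
      · intro f hdisj hmeas hind
        rw [integral_iUnion hmeas hdisj hGint.integrableOn]
        simp [hind]
    exact ae_eq_zero_of_forall_setIntegral_eq_of_sigmaFinite
      (fun s hs _ => hGint.integrableOn) (fun s hs _ => hall s hs)
  have h1 : ∀ n : ℕ, ∀ᵐ z ∂(μ.prod μ),
      z ∈ spanningSets μ n ×ˢ spanningSets μ n → (G : α × α → ℝ) z = 0 := by
    intro n
    have hk := key n
    rw [Filter.EventuallyEq, ae_restrict_iff' (hGmeas n)] at hk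
    filter_upwards [hk] with z hz hzm
    simpa using hz hzm
  have h2 : ∀ᵐ z ∂(μ.prod μ), (G : α × α → ℝ) z = 0 := by
    have h1' := ae_all_iff.2 h1
    filter_upwards [h1'] with z hz
    have hz1 : z.1 ∈ ⋃ i, spanningSets μ i := by rw [iUnion_spanningSets]; trivial
    have hz2 : z.2 ∈ ⋃ i, spanningSets μ i := by rw [iUnion_spanningSets]; trivial
    obtain ⟨n1, hn1⟩ := mem_iUnion.1 hz1
    obtain ⟨n2, hn2⟩ := mem_iUnion.1 hz2
    exact hz (max n1 n2) ⟨monotone_spanningSets μ (le_max_left _ _) hn1,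
      monotone_spanningSets μ (le_max_right _ _) hn2⟩
  apply Lp.ext (μ := μ.prod μ)
  filter_upwards [h2, Lp.coeFn_zero ℝ 2 (μ.prod μ)] with z hz h0
  rw [hz, h0]
  rfl

lemma hsOp_indicator_compact (A B : Set α) (hA : MeasurableSet A) (hB : MeasurableSet B)
    (hμA : μ A ≠ ∞) (hμB : μ B ≠ ∞) (hAB : (μ.prod μ) (A ×ˢ B) ≠ ∞) :
    IsCompactOperator ⇑(hsOp μ (indicatorConstLp 2 (hA.prod hB) hAB (1:ℝ))) := by
  have hEq : hsOp μ (indicatorConstLp 2 (hA.prod hB) hAB (1:ℝ))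
      = (innerSL ℝ (indicatorConstLp 2 hB hμB (1:ℝ))).smulRight
          (indicatorConstLp 2 hA hμA (1:ℝ)) := by
    ext f
    have hker : (⇑(indicatorConstLp 2 (hA.prod hB) hAB (1:ℝ)) : α × α → ℝ)
        =ᵐ[μ.prod μ] (A ×ˢ B).indicator fun _ => (1:ℝ) := indicatorConstLp_coeFn
    have hRf : ((innerSL ℝ (indicatorConstLp 2 hB hμB (1:ℝ))).smulRight
        (indicatorConstLp 2 hA hμA (1:ℝ))) f
        = (inner ℝ (indicatorConstLp 2 hB hμB (1:ℝ)) f : ℝ) • indicatorConstLp 2 hA hμA (1:ℝ) := by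
      rw [ContinuousLinearMap.smulRight_apply, innerSL_apply_apply]
    rw [hRf]
    filter_upwards [hsOp_ae (indicatorConstLp 2 (hA.prod hB) hAB (1:ℝ)) f,
      Measure.ae_ae_of_ae_prod hker,
      Lp.coeFn_smul (inner ℝ (indicatorConstLp 2 hB hμB (1:ℝ)) f : ℝ)
        (indicatorConstLp 2 hA hμA (1:ℝ)),
      (indicatorConstLp_coeFn (p := 2) (hs := hA) (hμs := hμA) (c := (1:ℝ)))]
      with x h1 hx hs hA1
    rw [h1, hs, Pi.smul_apply, smul_eq_mul, hA1,
      L2.inner_indicatorConstLp_one hB hμB f]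
    have e1 : ∫ y, (indicatorConstLp 2 (hA.prod hB) hAB (1:ℝ) : α × α → ℝ) (x, y) * f y ∂μ
        = ∫ y, (A ×ˢ B).indicator (fun _ => (1:ℝ)) (x, y) * f y ∂μ := by
      apply integral_congr_ae
      filter_upwards [hx] with y hy
      rw [hy]
    rw [e1]
    by_cases hxA : x ∈ A
    · have e2 : ∀ y, (A ×ˢ B).indicator (fun _ => (1:ℝ)) (x, y) * f y
          = B.indicator (fun y => (f : α → ℝ) y) y := by
        intro y
        by_cases hyB : y ∈ B <;>
          simp [Set.indicator, Set.mem_prod, hxA, hyB]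
      simp_rw [e2]
      rw [integral_indicator hB]
      simp [Set.indicator_of_mem hxA]
    · have e2 : ∀ y, (A ×ˢ B).indicator (fun _ => (1:ℝ)) (x, y) * f y = 0 := by
        intro y
        simp [Set.indicator, Set.mem_prod, hxA]
      simp_rw [e2]
      simp [Set.indicator_of_notMem hxA]
  rw [hEq]
  exact isCompactOperator_smulRight _ _

theorem hsOp_isCompact (G : Lp ℝ 2 (μ.prod μ)) : IsCompactOperator ⇑(hsOp μ G) := by
  classical
  set R : Set (Lp ℝ 2 (μ.prod μ)) :=
    {H | ∃ (A B : Set α) (hA : MeasurableSet A) (hB : MeasurableSet B)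
      (_ : μ A ≠ ∞) (_ : μ B ≠ ∞) (hAB : (μ.prod μ) (A ×ˢ B) ≠ ∞),
      H = indicatorConstLp 2 (hA.prod hB) hAB (1:ℝ)} with hRdef
  have horth : (Submodule.span ℝ R)ᗮ = ⊥ := by
    rw [Submodule.eq_bot_iff]
    intro G' hG'
    refine eq_zero_of_forall_rect G' ?_
    intro A B hA hB hμA hμB
    have hAB : (μ.prod μ) (A ×ˢ B) ≠ ∞ := by
      rw [Measure.prod_prod]; exact ENNReal.mul_ne_top hμA hμB
    have hmem : indicatorConstLp 2 (hA.prod hB) hAB (1:ℝ) ∈ Submodule.span ℝ R :=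
      Submodule.subset_span ⟨A, B, hA, hB, hμA, hμB, hAB, rfl⟩
    have h0 := (Submodule.mem_orthogonal _ _).1 hG' _ hmem
    rwa [L2.inner_indicatorConstLp_one (hA.prod hB) hAB G'] at h0
  have hclos : (Submodule.span ℝ R).topologicalClosure = ⊤ :=
    Submodule.topologicalClosure_eq_top_iff.2 horth
  have hGmem : G ∈ closure (Submodule.span ℝ R : Set (Lp ℝ 2 (μ.prod μ))) := by
    have hmem : G ∈ (Submodule.span ℝ R).topologicalClosure := by rw [hclos]; trivial
    exact hmem
  obtain ⟨u, hu, hulim⟩ := mem_closure_iff_seq_limit.1 hGmem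
  have hcpt : ∀ n, IsCompactOperator ⇑(hsOp μ (u n)) := by
    intro n
    refine Submodule.span_induction ?_ ?_ ?_ ?_ (hu n)
    · rintro H ⟨A, B, hA, hB, hμA, hμB, hAB, rfl⟩
      exact hsOp_indicator_compact A B hA hB hμA hμB hAB
    · rw [hsOp_zero]
      exact isCompactOperator_zero
    · intro a b _ _ ha hb
      rw [hsOp_add]
      exact ha.add hb
    · intro c a _ ha
      rw [hsOp_smul]
      exact ha.smul c
  have hdist : ∀ n, ‖hsOp μ (u n) - hsOp μ G‖ ≤ ‖u n - G‖ := by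
    intro n
    rw [← hsOp_sub]
    exact hsOp_norm _
  have htend : Tendsto (fun n => hsOp μ (u n)) atTop (𝓝 (hsOp μ G)) := by
    rw [tendsto_iff_norm_sub_tendsto_zero]
    have h2 : Tendsto (fun n => ‖u n - G‖) atTop (𝓝 0) := by
      rw [← tendsto_iff_norm_sub_tendsto_zero]
      exact hulim
    exact squeeze_zero (fun n => norm_nonneg _) hdist h2
  exact isCompactOperator_of_tendsto htend (Eventually.of_forall hcpt)

end Stmt5Aux

section Euclid
variable {d : ℕ}

lemma lint_shift_left (h : EuclideanSpace ℝ (Fin d) → ℝ≥0∞) (y : EuclideanSpace ℝ (Fin d)) :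
    ∫⁻ x, h (y - x) ∂volume = ∫⁻ x, h x ∂volume := by
  have e := MeasureTheory.lintegral_map_equiv (μ := (volume : Measure (EuclideanSpace ℝ (Fin d))))
    h (MeasurableEquiv.subLeft y)
  have hm : Measure.map (⇑(MeasurableEquiv.subLeft y)) (volume : Measure (EuclideanSpace ℝ (Fin d)))
      = volume := by
    have : ⇑(MeasurableEquiv.subLeft y) = fun x => y - x := rfl
    rw [this]
    exact Measure.map_sub_left_eq_self volume y
  rw [hm] at e
  calc ∫⁻ x, h (y - x) ∂volume
      = ∫⁻ x, h (MeasurableEquiv.subLeft y x) ∂volume := rfl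
    _ = ∫⁻ x, h x ∂volume := e.symm

end Euclid


open Stmt5Aux ENNReal Set Topology in
/-- 'If' direction of Lemma 4.1 (abstract form): a symmetric kernel `k` dominated by
`φ(y - x)` with `φ ∈ L¹ ∩ L^∞`, whose marginals `∫ k(x,y) dy` vanish at infinity,
induces a well-defined bounded compact integral operator on `L²(ℝ^d)`. -/
theorem stmt_5 (d : ℕ) (hd : 1 ≤ d)
    (φ : EuclideanSpace ℝ (Fin d) → ℝ)
    (hφ_meas : Measurable φ) (hφ_nonneg : ∀ x, 0 ≤ φ x)
    (hφ_int : Integrable φ (volume : Measure (EuclideanSpace ℝ (Fin d))))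
    (hφ_bdd : ∃ M : ℝ, ∀ x, φ x ≤ M)
    (k : EuclideanSpace ℝ (Fin d) → EuclideanSpace ℝ (Fin d) → ℝ)
    (hk_meas : Measurable (Function.uncurry k))
    (hk_symm : ∀ x y, k x y = k y x)
    (hk_nonneg : ∀ x y, 0 ≤ k x y)
    (hk_dom : ∀ x y, k x y ≤ φ (y - x))
    (hk_lim : Tendsto (fun x => ∫ y, k x y ∂volume)
      (cocompact (EuclideanSpace ℝ (Fin d))) (nhds 0)) :
    ∃ K : Lp ℝ 2 (volume : Measure (EuclideanSpace ℝ (Fin d))) →L[ℝ]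
        Lp ℝ 2 (volume : Measure (EuclideanSpace ℝ (Fin d))),
      (∀ f : Lp ℝ 2 (volume : Measure (EuclideanSpace ℝ (Fin d))),
        ∀ᵐ x ∂(volume : Measure (EuclideanSpace ℝ (Fin d))),
          K f x = ∫ y, k x y * f y ∂volume) ∧
      IsCompactOperator K := by
  classical
  obtain ⟨M, hM⟩ := hφ_bdd
  have hM0 : 0 ≤ M := le_trans (hφ_nonneg 0) (hM 0)
  set μ : Measure (EuclideanSpace ℝ (Fin d)) := volume with hμdef
  -- the L¹ mass of φ
  set Φ : ℝ≥0∞ := ∫⁻ z, ENNReal.ofReal (φ z) ∂μ with hΦdef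
  have hΦne : Φ ≠ ∞ := by
    have h1 : Φ = ∫⁻ z, (‖φ z‖₊ : ℝ≥0∞) ∂μ :=
      lintegral_congr fun z => (Real.enorm_eq_ofReal (hφ_nonneg z)).symm
    rw [h1]
    exact hφ_int.2.ne
  -- enorm identities for k
  have hk_enorm : ∀ x y, (‖k x y‖₊ : ℝ≥0∞) = ENNReal.ofReal (k x y) := fun x y =>
    Real.enorm_eq_ofReal (hk_nonneg x y)
  -- Schur bounds for k
  have hAk : ∀ x, ∫⁻ y, (‖k x y‖₊ : ℝ≥0∞) ∂μ ≤ Φ := by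
    intro x
    calc ∫⁻ y, (‖k x y‖₊ : ℝ≥0∞) ∂μ
        ≤ ∫⁻ y, ENNReal.ofReal (φ (y - x)) ∂μ := by
          refine lintegral_mono fun y => ?_
          rw [hk_enorm x y]
          exact ENNReal.ofReal_le_ofReal (hk_dom x y)
      _ = Φ := lintegral_sub_right_eq_self (fun z => ENNReal.ofReal (φ z)) x
  have hBk : ∀ y, ∫⁻ x, (‖k x y‖₊ : ℝ≥0∞) ∂μ ≤ Φ := by
    intro y
    calc ∫⁻ x, (‖k x y‖₊ : ℝ≥0∞) ∂μ
        ≤ ∫⁻ x, ENNReal.ofReal (φ (x - y)) ∂μ := by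
          refine lintegral_mono fun x => ?_
          rw [hk_enorm x y, hk_symm x y]
          exact ENNReal.ofReal_le_ofReal (hk_dom y x)
      _ = Φ := lintegral_sub_right_eq_self (fun z => ENNReal.ofReal (φ z)) y
  have hkm_ae : AEStronglyMeasurable (Function.uncurry k) (μ.prod μ) :=
    hk_meas.aestronglyMeasurable
  -- the full operator via the Schur test
  set C0 : ℝ≥0∞ := (Φ * Φ) ^ (1/2:ℝ) with hC0def
  have hC0 : C0 ≠ ∞ := by
    rw [hC0def]
    exact (ENNReal.rpow_lt_top_of_nonneg (by norm_num) (ENNReal.mul_ne_top hΦne hΦne)).ne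
  have hC0sq : C0 ^ (2:ℝ) = Φ * Φ := by
    rw [hC0def, ← ENNReal.rpow_mul]
    norm_num
  obtain ⟨K, hKnorm, hKspec⟩ := exists_kernelOp k hkm_ae C0 hC0 (fun f hf => by
    rw [hC0sq]
    exact schur_HB k hkm_ae Φ Φ hAk hBk f hf)
  refine ⟨K, fun f => ?_, ?_⟩
  · filter_upwards [(hKspec f).2] with x hx using hx
  -- compactness
  -- truncated kernels
  set Bn : ℕ → Set (EuclideanSpace ℝ (Fin d)) := fun n => Metric.closedBall 0 (n : ℝ) with hBndef
  have hBnmeas : ∀ n, MeasurableSet (Bn n) := fun n => measurableSet_closedBall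
  set kn : ℕ → EuclideanSpace ℝ (Fin d) → EuclideanSpace ℝ (Fin d) → ℝ :=
    fun n x y => k x y * (Bn n).indicator (fun _ => (1:ℝ)) y with hkndef
  set dn : ℕ → EuclideanSpace ℝ (Fin d) → EuclideanSpace ℝ (Fin d) → ℝ :=
    fun n x y => k x y * ((Bn n)ᶜ).indicator (fun _ => (1:ℝ)) y with hdndef
  have hknm : ∀ n, Measurable (Function.uncurry (kn n)) := fun n =>
    hk_meas.mul (((measurable_const).indicator (hBnmeas n)).comp measurable_snd)
  have hdnm : ∀ n, Measurable (Function.uncurry (dn n)) := fun n =>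
    hk_meas.mul (((measurable_const).indicator (hBnmeas n).compl).comp measurable_snd)
  -- kn is square integrable on the product
  set Q : ℝ≥0∞ := ∫⁻ z, (ENNReal.ofReal (φ z)) ^ (2:ℝ) ∂μ with hQdef
  have hsq : ∀ x : ℝ≥0∞, x ^ (2:ℝ) = x * x := fun x => by
    rw [show (2:ℝ) = ((2:ℕ):ℝ) by norm_num, ENNReal.rpow_natCast]
    ring
  have hQne : Q ≠ ∞ := by
    have hb : Q ≤ ENNReal.ofReal M * Φ := by
      rw [hQdef, hΦdef, ← lintegral_const_mul' _ _ ENNReal.ofReal_ne_top]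
      refine lintegral_mono fun z => ?_
      rw [hsq]
      exact mul_le_mul_left (ENNReal.ofReal_le_ofReal (hM z)) _
    exact (lt_of_le_of_lt hb (ENNReal.mul_lt_top ENNReal.ofReal_lt_top hΦne.lt_top)).ne
  have hKnMem : ∀ n, MemLp (Function.uncurry (kn n)) 2 (μ.prod μ) := by
    intro n
    refine ⟨(hknm n).aestronglyMeasurable, ?_⟩
    have hsqeq := lintegral_nnnorm_sq_eq (μ.prod μ) (Function.uncurry (kn n))
    have hbound : ∫⁻ z, (‖Function.uncurry (kn n) z‖₊ : ℝ≥0∞) ^ (2:ℝ) ∂(μ.prod μ)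
        ≤ Q * μ (Bn n) := by
      have hpt : ∀ z : EuclideanSpace ℝ (Fin d) × EuclideanSpace ℝ (Fin d),
          (‖Function.uncurry (kn n) z‖₊ : ℝ≥0∞) ^ (2:ℝ)
          ≤ (ENNReal.ofReal (φ (z.2 - z.1))) ^ (2:ℝ)
              * (Bn n).indicator (fun _ => (1:ℝ≥0∞)) z.2 := by
        intro z
        by_cases hz : z.2 ∈ Bn n
        · rw [Set.indicator_of_mem hz, mul_one]
          have : Function.uncurry (kn n) z = k z.1 z.2 := by
            simp [hkndef, Function.uncurry, Set.indicator_of_mem hz]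
          rw [this]
          gcongr
          rw [hk_enorm]
          exact ENNReal.ofReal_le_ofReal (hk_dom z.1 z.2)
        · have : Function.uncurry (kn n) z = 0 := by
            simp [hkndef, Function.uncurry, Set.indicator_of_notMem hz]
          rw [this]
          simp
      calc ∫⁻ z, (‖Function.uncurry (kn n) z‖₊ : ℝ≥0∞) ^ (2:ℝ) ∂(μ.prod μ)
          ≤ ∫⁻ z : EuclideanSpace ℝ (Fin d) × EuclideanSpace ℝ (Fin d),
              (ENNReal.ofReal (φ (z.2 - z.1))) ^ (2:ℝ)
                * (Bn n).indicator (fun _ => (1:ℝ≥0∞)) z.2 ∂(μ.prod μ) :=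
            lintegral_mono hpt
        _ = ∫⁻ y, ∫⁻ x, (ENNReal.ofReal (φ (y - x))) ^ (2:ℝ)
              * (Bn n).indicator (fun _ => (1:ℝ≥0∞)) y ∂μ ∂μ := by
            refine MeasureTheory.lintegral_prod_symm _ ?_
            exact ((((ENNReal.measurable_ofReal.comp
              (hφ_meas.comp (measurable_snd.sub measurable_fst))).pow_const _).mul
              (((measurable_const).indicator (hBnmeas n)).comp measurable_snd))).aemeasurable
        _ = ∫⁻ y, (Bn n).indicator (fun _ => (1:ℝ≥0∞)) y
              * ∫⁻ x, (ENNReal.ofReal (φ (y - x))) ^ (2:ℝ) ∂μ ∂μ := by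
            refine lintegral_congr fun y => ?_
            rw [lintegral_mul_const' ((Bn n).indicator (fun _ => (1:ℝ≥0∞)) y) _ (by
              by_cases hy : y ∈ Bn n
              · simp [Set.indicator_of_mem hy]
              · simp [Set.indicator_of_notMem hy])]
            exact mul_comm _ _
        _ = ∫⁻ y, (Bn n).indicator (fun _ => (1:ℝ≥0∞)) y * Q ∂μ := by
            refine lintegral_congr fun y => ?_
            rw [lint_shift_left (fun z => (ENNReal.ofReal (φ z)) ^ (2:ℝ)) y]
        _ = Q * μ (Bn n) := by
            have : ∀ y, (Bn n).indicator (fun _ => (1:ℝ≥0∞)) y * Q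
                = (Bn n).indicator (fun _ => Q) y := by
              intro y
              by_cases hy : y ∈ Bn n <;>
                simp [Set.indicator_of_mem, Set.indicator_of_notMem, hy]
            simp_rw [this]
            rw [lintegral_indicator (hBnmeas n), setLIntegral_const, mul_comm]
    rw [eLpNorm_eq_lintegral_rpow_enorm_toReal (by norm_num) (by norm_num)]
    have h2 : ((2:ℝ≥0∞)).toReal = (2:ℝ) := by norm_num
    rw [h2]
    refine ENNReal.rpow_lt_top_of_nonneg (by norm_num) ?_
    exact (lt_of_le_of_lt hbound (ENNReal.mul_lt_top hQne.lt_top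
      measure_closedBall_lt_top)).ne
  -- the truncated operators are compact Hilbert-Schmidt operators
  set Gn : ∀ n : ℕ, Lp ℝ 2 (μ.prod μ) := fun n => ((hKnMem n).toLp _) with hGndef
  set Kn : ℕ → Lp ℝ 2 μ →L[ℝ] Lp ℝ 2 μ := fun n => hsOp μ (Gn n) with hKndef
  have hKn_cpt : ∀ n, IsCompactOperator ⇑(Kn n) := fun n => hsOp_isCompact (Gn n)
  have hGn_coe : ∀ n, (⇑(Gn n) : _ → ℝ) =ᵐ[μ.prod μ] Function.uncurry (kn n) := fun n =>
    MemLp.coeFn_toLp _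
  have hKn_ae : ∀ n (f : Lp ℝ 2 μ),
      ⇑(Kn n f) =ᵐ[μ] fun x => ∫ y, kn n x y * f y ∂μ := by
    intro n f
    filter_upwards [hsOp_ae (Gn n) f, Measure.ae_ae_of_ae_prod (hGn_coe n)] with x h1 hx
    rw [h1]
    refine integral_congr_ae ?_
    filter_upwards [hx] with y hy
    rw [hy]
    rfl
  have hKn_int : ∀ n (f : Lp ℝ 2 μ),
      ∀ᵐ x ∂μ, Integrable (fun y => kn n x y * f y) μ := by
    intro n f
    filter_upwards [hsOp_int (Gn n) f, Measure.ae_ae_of_ae_prod (hGn_coe n)] with x h1 hx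
    refine h1.congr ?_
    filter_upwards [hx] with y hy
    rw [hy]
    rfl
  -- the complementary operators
  have hAdn : ∀ n x, ∫⁻ y, (‖dn n x y‖₊ : ℝ≥0∞) ∂μ ≤ Φ := by
    intro n x
    refine le_trans (lintegral_mono fun y => ?_) (hAk x)
    by_cases hy : y ∈ (Bn n)ᶜ <;>
      simp [hdndef, Set.indicator_of_mem, Set.indicator_of_notMem, hy]
  have hBdn : ∀ n y, ∫⁻ x, (‖dn n x y‖₊ : ℝ≥0∞) ∂μ ≤ Φ := by
    intro n y
    refine le_trans (lintegral_mono fun x => ?_) (hBk y)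
    by_cases hy : y ∈ (Bn n)ᶜ <;>
      simp [hdndef, Set.indicator_of_mem, Set.indicator_of_notMem, hy]
  have hDex : ∀ n : ℕ, ∃ D : Lp ℝ 2 μ →L[ℝ] Lp ℝ 2 μ, ‖D‖ ≤ C0.toReal ∧
      ∀ f : Lp ℝ 2 μ,
        (∀ᵐ x ∂μ, Integrable (fun y => dn n x y * f y) μ) ∧
        (⇑(D f) =ᵐ[μ] fun x => ∫ y, dn n x y * f y ∂μ) := by
    intro n
    exact exists_kernelOp (dn n) (hdnm n).aestronglyMeasurable C0 hC0 (fun f hf => by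
      rw [hC0sq]
      exact schur_HB (dn n) (hdnm n).aestronglyMeasurable Φ Φ (hAdn n) (hBdn n) f hf)
  choose Dn hDn_norm hDn_spec using hDex
  -- K = Kn + Dn
  have hsum : ∀ n, K = Kn n + Dn n := by
    intro n
    refine ContinuousLinearMap.ext fun f => Lp.ext ?_
    have hptw : ∀ x y, kn n x y * (f : _ → ℝ) y + dn n x y * f y = k x y * f y := by
      intro x y
      have := congrFun (Set.indicator_self_add_compl (Bn n) (fun _ => (1:ℝ))) y
      simp only [Pi.add_apply] at this
      calc kn n x y * (f : _ → ℝ) y + dn n x y * f y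
          = k x y * (((Bn n).indicator (fun _ => (1:ℝ)) y)
              + ((Bn n)ᶜ.indicator (fun _ => (1:ℝ)) y)) * f y := by
            simp only [hkndef, hdndef]
            ring
        _ = k x y * f y := by rw [this]; ring
    filter_upwards [(hKspec f).2, hKn_ae n f, (hDn_spec n f).2, hKn_int n f,
      (hDn_spec n f).1, Lp.coeFn_add (Kn n f) (Dn n f)] with x h1 h2 h3 h4 h5 h6
    rw [h1, ContinuousLinearMap.add_apply, h6, Pi.add_apply, h2, h3]
    have heq : ∫ y, k x y * (f : _ → ℝ) y ∂μ
        = ∫ y, (kn n x y * (f : _ → ℝ) y + dn n x y * f y) ∂μ :=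
      integral_congr_ae (Eventually.of_forall fun y => (hptw x y).symm)
    rw [heq, integral_add h4 h5]
  -- operator norm convergence
  have htend : Tendsto (fun n => Kn n) atTop (𝓝 K) := by
    rw [Metric.tendsto_atTop]
    intro ε hε
    set ε' : ℝ := ε ^ 2 / (Φ.toReal + 1) with hε'def
    have hΦ0 : (0:ℝ) ≤ Φ.toReal := ENNReal.toReal_nonneg
    have hε' : 0 < ε' := div_pos (pow_pos hε 2) (by linarith)
    have hev := Metric.tendsto_nhds.mp hk_lim ε' hε'
    rw [(hasBasis_cocompact).eventually_iff] at hev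
    obtain ⟨Kc, hKc_cpt, hKc_sub⟩ := hev
    obtain ⟨r, hr⟩ := hKc_cpt.isBounded.subset_closedBall 0
    refine ⟨⌈r⌉₊, fun n hn => ?_⟩
    -- improved Schur bound for dn n
    have hBdn' : ∀ y, ∫⁻ x, (‖dn n x y‖₊ : ℝ≥0∞) ∂μ ≤ ENNReal.ofReal ε' := by
      intro y
      by_cases hy : y ∈ Bn n
      · have : ∀ x, dn n x y = 0 := fun x => by
          simp [hdndef, Set.indicator_of_notMem (fun h => h hy : y ∉ (Bn n)ᶜ)]
        simp only [this]
        simp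
      · -- y outside the ball of radius n ≥ r
        have hyK : y ∉ Kc := by
          intro hyK
          refine hy ?_
          have h1 : y ∈ Metric.closedBall (0 : EuclideanSpace ℝ (Fin d)) r := hr hyK
          refine Metric.closedBall_subset_closedBall ?_ h1
          calc r ≤ (⌈r⌉₊ : ℝ) := Nat.le_ceil r
            _ ≤ (n : ℝ) := by exact_mod_cast hn
        have hmy : |∫ x, k y x ∂μ| < ε' := by
          have := hKc_sub hyK
          simpa [Real.dist_eq] using this
        have hint_y : Integrable (fun x => k y x) μ := by
          refine Integrable.mono' (hφ_int.comp_sub_right y) ?_ ?_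
          · exact (hk_meas.comp (measurable_prodMk_left (x := y))).aestronglyMeasurable
          · refine Eventually.of_forall fun x => ?_
            rw [Real.norm_eq_abs, abs_of_nonneg (hk_nonneg y x)]
            exact hk_dom y x
        calc ∫⁻ x, (‖dn n x y‖₊ : ℝ≥0∞) ∂μ
            ≤ ∫⁻ x, ENNReal.ofReal (k y x) ∂μ := by
              refine lintegral_mono fun x => ?_
              have : (‖dn n x y‖₊ : ℝ≥0∞) ≤ (‖k x y‖₊ : ℝ≥0∞) := by
                by_cases hy2 : y ∈ (Bn n)ᶜ <;>
                  simp [hdndef, Set.indicator_of_mem, Set.indicator_of_notMem, hy2]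
              rw [hk_enorm x y, hk_symm x y] at this
              exact this
          _ = ENNReal.ofReal (∫ x, k y x ∂μ) :=
              (ofReal_integral_eq_lintegral_ofReal hint_y
                (Eventually.of_forall fun x => hk_nonneg y x)).symm
          _ ≤ ENNReal.ofReal ε' := by
              refine ENNReal.ofReal_le_ofReal ?_
              calc ∫ x, k y x ∂μ ≤ |∫ x, k y x ∂μ| := le_abs_self _
                _ ≤ ε' := le_of_lt hmy
    -- a better operator giving the norm bound
    set C1 : ℝ≥0∞ := (Φ * ENNReal.ofReal ε') ^ (1/2:ℝ) with hC1def
    have hC1 : C1 ≠ ∞ := by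
      rw [hC1def]
      exact (ENNReal.rpow_lt_top_of_nonneg (by norm_num)
        (ENNReal.mul_ne_top hΦne ENNReal.ofReal_ne_top)).ne
    have hC1sq : C1 ^ (2:ℝ) = Φ * ENNReal.ofReal ε' := by
      rw [hC1def, ← ENNReal.rpow_mul]
      norm_num
    obtain ⟨D', hD'norm, hD'spec⟩ := exists_kernelOp (dn n) (hdnm n).aestronglyMeasurable C1 hC1
      (fun f hf => by
        rw [hC1sq]
        exact schur_HB (dn n) (hdnm n).aestronglyMeasurable Φ (ENNReal.ofReal ε')
          (hAdn n) hBdn' f hf)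
    have hDD : Dn n = D' := by
      refine ContinuousLinearMap.ext fun f => Lp.ext ?_
      filter_upwards [(hDn_spec n f).2, (hD'spec f).2] with x h1 h2
      rw [h1, h2]
    have hdist : dist (Kn n) K = ‖Dn n‖ := by
      rw [dist_eq_norm, hsum n]
      have : Kn n - (Kn n + Dn n) = -(Dn n) := by abel
      rw [this, norm_neg]
    rw [hdist, hDD]
    refine lt_of_le_of_lt hD'norm ?_
    -- C1.toReal < ε
    have ht : (Φ * ENNReal.ofReal ε').toReal < ε ^ 2 := by
      rw [ENNReal.toReal_mul, ENNReal.toReal_ofReal hε'.le, hε'def]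
      calc Φ.toReal * (ε ^ 2 / (Φ.toReal + 1)) = ε ^ 2 * (Φ.toReal / (Φ.toReal + 1)) := by ring
        _ < ε ^ 2 * 1 := by
            refine mul_lt_mul_of_pos_left ?_ (pow_pos hε 2)
            rw [div_lt_one (by linarith)]
            linarith
        _ = ε ^ 2 := mul_one _
    have hC1toReal : C1.toReal = (Φ * ENNReal.ofReal ε').toReal ^ (1/2:ℝ) := by
      rw [hC1def, ENNReal.toReal_rpow]
    rw [hC1toReal]
    calc (Φ * ENNReal.ofReal ε').toReal ^ (1/2:ℝ) < (ε ^ 2) ^ (1/2:ℝ) := by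
          refine Real.rpow_lt_rpow ENNReal.toReal_nonneg ht (by norm_num)
      _ = ε := by
          rw [show (ε:ℝ) ^ 2 = ε ^ ((2:ℕ):ℝ) by rw [Real.rpow_natCast],
            ← Real.rpow_mul hε.le]
          norm_num
  exact isCompactOperator_of_tendsto htend (Eventually.of_forall hKn_cpt)
end
end

section
/- Let d ≥ 1 be an integer. Let φ ∈ L¹(ℝ^d) ∩ L^∞(ℝ^d) be nonnegative, and let k' : ℝ^d × ℝ^d → ℝ be measurable with k'(x,y) = k'(y,x) and 0 ≤ k'(x,y) ≤ φ(y − x) for all x, y ∈ ℝ^d. Define k(x,y) = ∫_{ℝ^d} k'(x,z) k'(z,y) dz. If the integral operator K f(x) = ∫_{ℝ^d} k(x,y) f(y) dy is a compact operator on L²(ℝ^d, Lebesgue measure), then ∫_{ℝ^d} k(x,y) dy → 0 as |x| → ∞. -/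
open MeasureTheory Filter

set_option maxHeartbeats 2000000
set_option synthInstance.maxHeartbeats 1000000

private lemma aux_swap {α β : Type*} [MeasurableSpace α] [MeasurableSpace β]
    (μ : Measure α) (ν : Measure β) [SFinite μ] [SFinite ν] {F : α → β → ℝ}
    (hm : AEStronglyMeasurable (Function.uncurry F) (μ.prod ν))
    (h0 : ∀ x y, 0 ≤ F x y) (h1 : ∀ x, Integrable (F x) ν)
    (h2 : Integrable (fun x => ∫ y, F x y ∂ν) μ) :
    ∫ x, ∫ y, F x y ∂ν ∂μ = ∫ y, ∫ x, F x y ∂μ ∂ν := by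
  refine integral_integral_swap ?_
  refine (integrable_prod_iff hm).2 ⟨Eventually.of_forall fun x => h1 x, ?_⟩
  refine h2.congr (Eventually.of_forall fun x => ?_)
  refine integral_congr_ae (Eventually.of_forall fun y => ?_)
  exact (Real.norm_of_nonneg (h0 x y)).symm

/-- 'Only if' direction of Lemma 4.1 (abstract form): if the kernel
`k(x,y) = ∫ k'(x,z) k'(z,y) dz`, built from a symmetric kernel `k'` dominated by
`φ(y - x)` with `φ ∈ L¹ ∩ L^∞`, induces a compact integral operator on `L²(ℝ^d)`,
then `∫ k(x,y) dy → 0` as `|x| → ∞`. -/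
theorem stmt_6 (d : ℕ) (hd : 1 ≤ d)
    (φ : EuclideanSpace ℝ (Fin d) → ℝ)
    (hφ_meas : Measurable φ) (hφ_nonneg : ∀ x, 0 ≤ φ x)
    (hφ_int : Integrable φ (volume : Measure (EuclideanSpace ℝ (Fin d))))
    (hφ_bdd : ∃ M : ℝ, ∀ x, φ x ≤ M)
    (k' : EuclideanSpace ℝ (Fin d) → EuclideanSpace ℝ (Fin d) → ℝ)
    (hk'_meas : Measurable (Function.uncurry k'))
    (hk'_symm : ∀ x y, k' x y = k' y x)
    (hk'_nonneg : ∀ x y, 0 ≤ k' x y)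
    (hk'_dom : ∀ x y, k' x y ≤ φ (y - x))
    (k : EuclideanSpace ℝ (Fin d) → EuclideanSpace ℝ (Fin d) → ℝ)
    (hk_def : ∀ x y, k x y = ∫ z, k' x z * k' z y ∂volume)
    (hK : ∃ K : Lp ℝ 2 (volume : Measure (EuclideanSpace ℝ (Fin d))) →L[ℝ]
        Lp ℝ 2 (volume : Measure (EuclideanSpace ℝ (Fin d))),
      (∀ f : Lp ℝ 2 (volume : Measure (EuclideanSpace ℝ (Fin d))),
        ∀ᵐ x ∂(volume : Measure (EuclideanSpace ℝ (Fin d))),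
          K f x = ∫ y, k x y * f y ∂volume) ∧
      IsCompactOperator K) :
    Tendsto (fun x => ∫ y, k x y ∂volume)
      (cocompact (EuclideanSpace ℝ (Fin d))) (nhds 0) := by
  classical
  obtain ⟨M, hM⟩ := hφ_bdd
  obtain ⟨K, hKrep, hKcomp⟩ := hK
  have hk'measx : ∀ x, Measurable (k' x) := fun x => hk'_meas.of_uncurry_left
  have hk'measy : ∀ y, Measurable fun z => k' z y := fun y => hk'_meas.of_uncurry_right
  have hM0 : 0 ≤ M := le_trans (hφ_nonneg 0) (hM 0)
  -- translated copies of φ are integrable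
  have hφx : ∀ x : EuclideanSpace ℝ (Fin d), Integrable (fun z => φ (z - x)) volume := fun x =>
    ((measurePreserving_sub_right volume x).integrable_comp hφ_int.aestronglyMeasurable).2 hφ_int
  -- the convolution g = φ ⋆ φ
  set g : EuclideanSpace ℝ (Fin d) → ℝ := fun w => ∫ z, φ z * φ (w - z) ∂volume with hg_def
  have hg_int : Integrable g volume := by
    have h := hφ_int.integrable_convolution (ContinuousLinearMap.mul ℝ ℝ) hφ_int
    refine h.congr (Eventually.of_forall fun w => ?_)
    rw [convolution_def]
    simp [ContinuousLinearMap.mul_apply']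
    rfl
  have hg_nonneg : ∀ w, 0 ≤ g w := fun w =>
    integral_nonneg fun z => mul_nonneg (hφ_nonneg z) (hφ_nonneg _)
  -- integrability of the dominating product
  have hint_dom : ∀ x y : EuclideanSpace ℝ (Fin d),
      Integrable (fun z => φ (z - x) * φ (y - z)) volume := by
    intro x y
    refine Integrable.mono' ((hφx x).const_mul M)
      (((hφ_meas.comp (measurable_id.sub_const x)).mul
        (hφ_meas.comp (measurable_const.sub measurable_id))).aestronglyMeasurable)
      (Eventually.of_forall fun z => ?_)
    rw [Real.norm_of_nonneg (mul_nonneg (hφ_nonneg _) (hφ_nonneg _))]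
    calc φ (z - x) * φ (y - z) ≤ φ (z - x) * M :=
          mul_le_mul_of_nonneg_left (hM _) (hφ_nonneg _)
      _ = M * φ (z - x) := mul_comm _ _
  have hint_k' : ∀ x y : EuclideanSpace ℝ (Fin d),
      Integrable (fun z => k' x z * k' z y) volume := by
    intro x y
    refine (hint_dom x y).mono' ((hk'measx x).mul (hk'measy y)).aestronglyMeasurable
      (Eventually.of_forall fun z => ?_)
    rw [Real.norm_of_nonneg (mul_nonneg (hk'_nonneg _ _) (hk'_nonneg _ _))]
    exact mul_le_mul (hk'_dom _ _) (hk'_dom _ _) (hk'_nonneg _ _) (hφ_nonneg _)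
  -- pointwise domination of k by g
  have hkg : ∀ x y, k x y ≤ g (y - x) := by
    intro x y
    rw [hk_def]
    have h1 : ∫ z, k' x z * k' z y ∂volume ≤ ∫ z, φ (z - x) * φ (y - z) ∂volume :=
      integral_mono (hint_k' x y) (hint_dom x y) fun z =>
        mul_le_mul (hk'_dom _ _) (hk'_dom _ _) (hk'_nonneg _ _) (hφ_nonneg _)
    refine h1.trans_eq ?_
    have h2 := integral_add_right_eq_self (μ := volume)
      (fun z => φ (z - x) * φ (y - z)) x
    rw [← h2, hg_def]
    refine integral_congr_ae (Eventually.of_forall fun z => ?_)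
    show φ (z + x - x) * φ (y - (z + x)) = φ z * φ (y - x - z)
    rw [add_sub_cancel_right, show y - (z + x) = y - x - z by abel]
  have hk_nonneg : ∀ x y, 0 ≤ k x y := fun x y => by
    rw [hk_def]
    exact integral_nonneg fun z => mul_nonneg (hk'_nonneg _ _) (hk'_nonneg _ _)
  -- measurability of k
  have hkmeas : Measurable (Function.uncurry k) := by
    have hsm : StronglyMeasurable fun p : (EuclideanSpace ℝ (Fin d) × EuclideanSpace ℝ (Fin d)) ×
        EuclideanSpace ℝ (Fin d) => k' p.1.1 p.2 * k' p.2 p.1.2 :=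
      ((hk'_meas.comp (measurable_fst.fst.prodMk measurable_snd)).mul
        (hk'_meas.comp (measurable_snd.prodMk measurable_fst.snd))).stronglyMeasurable
    have h := hsm.integral_prod_right' (ν := volume)
    have : Function.uncurry k = fun p : EuclideanSpace ℝ (Fin d) × EuclideanSpace ℝ (Fin d) =>
        ∫ z, k' p.1 z * k' z p.2 ∂volume := by
      funext p
      exact hk_def p.1 p.2
    rw [this]
    exact h.measurable
  have hk_measx : ∀ x, Measurable (k x) := fun x => hkmeas.of_uncurry_left
  have hgx : ∀ x : EuclideanSpace ℝ (Fin d), Integrable (fun y => g (y - x)) volume := fun x =>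
    ((measurePreserving_sub_right volume x).integrable_comp hg_int.aestronglyMeasurable).2 hg_int
  have hk_int : ∀ x, Integrable (k x) volume := fun x =>
    (hgx x).mono' (hk_measx x).aestronglyMeasurable
      (Eventually.of_forall fun y => by
        rw [Real.norm_of_nonneg (hk_nonneg x y)]; exact hkg x y)
  -- setup contradiction
  by_contra hcon
  rw [Metric.tendsto_nhds] at hcon
  push_neg at hcon
  obtain ⟨ε, hε, hfreq⟩ := hcon
  have hfreq' : ∀ r : ℝ, ∃ x : EuclideanSpace ℝ (Fin d),
      r < ‖x‖ ∧ ε ≤ ∫ y, k x y ∂volume := by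
    intro r
    have hmem : (Metric.closedBall (0 : EuclideanSpace ℝ (Fin d)) r)ᶜ ∈
        cocompact (EuclideanSpace ℝ (Fin d)) := by
      rw [mem_cocompact]
      exact ⟨_, isCompact_closedBall 0 r, subset_rfl⟩
    obtain ⟨x, hx1, hx2⟩ :=
      (hfreq.and_eventually (eventually_of_mem hmem fun x hx => hx)).exists
    refine ⟨x, ?_, ?_⟩
    · simpa [not_le, dist_zero_right] using hx2
    · rwa [Real.dist_eq, sub_zero,
        abs_of_nonneg (integral_nonneg fun y => hk_nonneg x y)] at hx1
  -- choose R with small tail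
  have htail0 : ∃ R : ℝ, 0 < R ∧
      ∫ w in (Metric.ball (0 : EuclideanSpace ℝ (Fin d)) R)ᶜ, g w ∂volume < ε / 2 := by
    have hs : ∀ n : ℕ, MeasurableSet (Metric.ball (0 : EuclideanSpace ℝ (Fin d)) ((n : ℝ) + 1)) :=
      fun n => measurableSet_ball
    have hmono : Monotone fun n : ℕ => Metric.ball (0 : EuclideanSpace ℝ (Fin d)) ((n : ℝ) + 1) := by
      intro m n hmn
      exact Metric.ball_subset_ball (by exact_mod_cast add_le_add_left (Nat.cast_le.2 hmn) 1)
    have hunion : ⋃ n : ℕ, Metric.ball (0 : EuclideanSpace ℝ (Fin d)) ((n : ℝ) + 1) = Set.univ := by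
      ext w
      simp only [Set.mem_iUnion, Set.mem_univ, iff_true, Metric.mem_ball, dist_zero_right]
      obtain ⟨n, hn⟩ := exists_nat_gt ‖w‖
      exact ⟨n, by linarith⟩
    have htend := tendsto_setIntegral_of_monotone hs hmono
      (by rw [hunion]; exact hg_int.integrableOn)
    rw [hunion, setIntegral_univ] at htend
    have htend2 : Tendsto (fun n : ℕ =>
        ∫ w in (Metric.ball (0 : EuclideanSpace ℝ (Fin d)) ((n : ℝ) + 1))ᶜ, g w ∂volume)
        atTop (nhds 0) := by
      have heq : ∀ n : ℕ,
          ∫ w in (Metric.ball (0 : EuclideanSpace ℝ (Fin d)) ((n : ℝ) + 1))ᶜ, g w ∂volume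
          = (∫ w, g w ∂volume)
            - ∫ w in Metric.ball (0 : EuclideanSpace ℝ (Fin d)) ((n : ℝ) + 1), g w ∂volume := by
        intro n
        rw [eq_sub_iff_add_eq, add_comm, integral_add_compl (hs n) hg_int]
      have hsub := (tendsto_const_nhds (x := ∫ w, g w ∂volume)).sub htend
      rw [sub_self] at hsub
      exact hsub.congr fun n => (heq n).symm
    obtain ⟨n, hn⟩ := (htend2.eventually (gt_mem_nhds (show (0:ℝ) < ε / 2 by linarith))).exists
    exact ⟨(n : ℝ) + 1, by positivity, hn⟩
  obtain ⟨R, hR, hRtail⟩ := htail0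
  -- tail estimate for each x
  have htail : ∀ x : EuclideanSpace ℝ (Fin d),
      ∫ y in (Metric.ball x R)ᶜ, k x y ∂volume < ε / 2 := by
    intro x₀
    have hsub : ∫ y in (Metric.ball x₀ R)ᶜ, k x₀ y ∂volume
        ≤ ∫ y in (Metric.ball x₀ R)ᶜ, g (y - x₀) ∂volume :=
      setIntegral_mono_on (hk_int x₀).integrableOn (hgx x₀).integrableOn
        measurableSet_ball.compl fun y _ => hkg x₀ y
    refine lt_of_le_of_lt (hsub.trans_eq ?_) hRtail
    rw [← integral_indicator measurableSet_ball.compl,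
      ← integral_indicator measurableSet_ball.compl]
    have hind : (fun y => ((Metric.ball x₀ R)ᶜ).indicator (fun y => g (y - x₀)) y)
        = fun y => ((Metric.ball (0 : EuclideanSpace ℝ (Fin d)) R)ᶜ).indicator g (y - x₀) := by
      funext y
      have hmemiff : y ∈ (Metric.ball x₀ R)ᶜ ↔
          y - x₀ ∈ (Metric.ball (0 : EuclideanSpace ℝ (Fin d)) R)ᶜ := by
        simp [Metric.mem_ball, dist_eq_norm, dist_zero_right]
      by_cases hy : y ∈ (Metric.ball x₀ R)ᶜ
      · rw [Set.indicator_of_mem hy, Set.indicator_of_mem (hmemiff.1 hy)]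
      · rw [Set.indicator_of_notMem hy,
          Set.indicator_of_notMem (fun h => hy (hmemiff.2 h))]
    rw [hind, integral_sub_right_eq_self
      (((Metric.ball (0 : EuclideanSpace ℝ (Fin d)) R)ᶜ).indicator g) x₀]
  -- construct the sequence of centers
  choose ξ hξ1 hξ2 using hfreq'
  set x : ℕ → EuclideanSpace ℝ (Fin d) :=
    fun n => Nat.rec (ξ 0) (fun _ p => ξ (‖p‖ + 2 * R + 1)) n with hx_def
  have hxsucc : ∀ n, ‖x n‖ + 2 * R + 1 < ‖x (n + 1)‖ := fun n => hξ1 _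
  have hxε : ∀ n, ε ≤ ∫ y, k (x n) y ∂volume := by
    intro n
    cases n with
    | zero => exact hξ2 0
    | succ m => exact hξ2 _
  have hgap : ∀ i j, i < j → ‖x i‖ + 2 * R + 1 ≤ ‖x j‖ := by
    intro i j hij
    induction j with
    | zero => omega
    | succ j ih =>
      rcases Nat.lt_succ_iff_lt_or_eq.1 hij with h | h
      · have h1 := ih h
        have h2 := hxsucc j
        linarith
      · subst h
        exact (hxsucc i).le
  have hdisj : ∀ i j, i ≠ j → Disjoint (Metric.ball (x i) R) (Metric.ball (x j) R) := by
    have key : ∀ i j, i < j → Disjoint (Metric.ball (x i) R) (Metric.ball (x j) R) := by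
      intro i j h
      refine Metric.ball_disjoint_ball ?_
      have h1 := hgap i j h
      have h2 : ‖x j‖ - ‖x i‖ ≤ dist (x i) (x j) := by
        rw [dist_comm, dist_eq_norm]
        exact (norm_sub_norm_le _ _)
      linarith
    intro i j hij
    rcases hij.lt_or_gt with h | h
    · exact key i j h
    · exact (key j i h).symm
  -- the L² indicator functions
  have hBmeas : ∀ n, MeasurableSet (Metric.ball (x n) R) := fun n => measurableSet_ball
  have hBfin : ∀ n, volume (Metric.ball (x n) R) ≠ ⊤ := fun n => measure_ball_lt_top.ne
  set f : ℕ → Lp ℝ 2 (volume : Measure (EuclideanSpace ℝ (Fin d))) :=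
    fun n => indicatorConstLp 2 (hBmeas n) (hBfin n) (1 : ℝ) with hf_def
  set V : ℝ := (volume (Metric.ball (0 : EuclideanSpace ℝ (Fin d)) R)).toReal with hV_def
  have hVball : ∀ n, (volume (Metric.ball (x n) R)).toReal = V := fun n => by
    rw [hV_def, Measure.addHaar_ball_center]
  have hVpos : 0 < V :=
    ENNReal.toReal_pos (Metric.measure_ball_pos volume 0 hR).ne' measure_ball_lt_top.ne
  have hfnorm : ∀ n, ‖f n‖ = Real.sqrt V := by
    intro n
    rw [hf_def, norm_indicatorConstLp (by norm_num) (by norm_num), Real.sqrt_eq_rpow, measureReal_def, hVball n]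
    norm_num
  -- inner products
  have hinner_eq : ∀ (u v : Lp ℝ 2 (volume : Measure (EuclideanSpace ℝ (Fin d)))),
      inner (𝕜 := ℝ) u v = ∫ a, (u a) * (v a) ∂volume := by
    intro u v
    rw [MeasureTheory.L2.inner_def]
    exact integral_congr_ae (Eventually.of_forall fun a => by simp [RCLike.inner_apply, mul_comm])
  have hfinner0 : ∀ i j, i ≠ j → inner (𝕜 := ℝ) (f i) (f j) = 0 := by
    intro i j hij
    rw [hinner_eq]
    refine integral_eq_zero_of_ae ?_
    filter_upwards [indicatorConstLp_coeFn (p := 2)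
        (μ := (volume : Measure (EuclideanSpace ℝ (Fin d)))) (hs := hBmeas i) (hμs := hBfin i)
        (c := (1:ℝ)),
      indicatorConstLp_coeFn (p := 2)
        (μ := (volume : Measure (EuclideanSpace ℝ (Fin d)))) (hs := hBmeas j) (hμs := hBfin j)
        (c := (1:ℝ))] with a h1 h2
    rw [hf_def]
    simp only
    rw [h1, h2]
    by_cases hai : a ∈ Metric.ball (x i) R
    · have haj : a ∉ Metric.ball (x j) R := fun haj =>
        Set.disjoint_left.1 (hdisj i j hij) hai haj
      simp [Set.indicator_of_notMem haj]
    · simp [Set.indicator_of_notMem hai]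
  -- orthonormal family
  set e : ℕ → Lp ℝ 2 (volume : Measure (EuclideanSpace ℝ (Fin d))) :=
    fun n => ((Real.sqrt V)⁻¹ : ℝ) • f n with he_def
  have hsqrtV : Real.sqrt V ≠ 0 := by positivity
  have horth : Orthonormal ℝ e := by
    rw [orthonormal_iff_ite]
    intro i j
    rw [he_def]
    simp only
    rw [real_inner_smul_left, real_inner_smul_right]
    by_cases hij : i = j
    · subst hij
      rw [if_pos rfl, real_inner_self_eq_norm_sq, hfnorm]
      rw [Real.sq_sqrt hVpos.le]
      field_simp
      rw [Real.sq_sqrt hVpos.le]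
    · rw [hfinner0 i j hij, if_neg hij]
      ring
  -- main lower bound
  set C : ℝ := Real.sqrt (∫ z, φ z ^ 2 ∂volume) with hC_def
  have hφsq_int : Integrable (fun z => φ z ^ 2) volume := by
    refine (hφ_int.const_mul M).mono' (hφ_meas.pow_const 2).aestronglyMeasurable
      (Eventually.of_forall fun z => ?_)
    rw [Real.norm_of_nonneg (by positivity)]
    calc φ z ^ 2 = φ z * φ z := sq (φ z)
      _ ≤ M * φ z := mul_le_mul_of_nonneg_right (hM _) (hφ_nonneg _)
  set I1 : ℝ := ∫ w, φ w ∂volume with hI1_def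
  have hI1nn : 0 ≤ I1 := integral_nonneg hφ_nonneg
  set I2 : ℝ := ∫ w, g w ∂volume with hI2_def
  have hmain : ∀ n, ε / 2 ≤ C * Real.sqrt (inner (𝕜 := ℝ) (K (f n)) (f n)) ∧
      (0:ℝ) ≤ inner (𝕜 := ℝ) (K (f n)) (f n) := by
    intro n
    set B : Set (EuclideanSpace ℝ (Fin d)) := Metric.ball (x n) R with hB_def
    have hBm : MeasurableSet B := measurableSet_ball
    have hBlt : volume B < ⊤ := measure_ball_lt_top
    set q : EuclideanSpace ℝ (Fin d) → ℝ := fun z => ∫ y in B, k' z y ∂volume with hq_def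
    have hq_sm : StronglyMeasurable q :=
      (hk'_meas.stronglyMeasurable).integral_prod_right' (ν := volume.restrict B)
    have hq_nonneg : ∀ z, 0 ≤ q z := fun z => integral_nonneg fun y => hk'_nonneg _ _
    set h : EuclideanSpace ℝ (Fin d) → ℝ := fun z => ∫ y in B, φ (y - z) ∂volume with hh_def
    have hk'B_int : ∀ z, IntegrableOn (k' z) B volume := by
      intro z
      refine Integrable.mono' ((hφx z).integrableOn)
        ((hk'measx z).aestronglyMeasurable.restrict) (Eventually.of_forall fun y => ?_)
      rw [Real.norm_of_nonneg (hk'_nonneg _ _)]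
      exact hk'_dom z y
    have hqh : ∀ z, q z ≤ h z := by
      intro z
      exact setIntegral_mono_on (hk'B_int z) ((hφx z).integrableOn) hBm fun y _ => hk'_dom z y
    have hq_le : ∀ z, q z ≤ I1 := by
      intro z
      have h2 : ∫ y in B, φ (y - z) ∂volume ≤ ∫ y, φ (y - z) ∂volume :=
        setIntegral_le_integral (hφx z) (Eventually.of_forall fun y => hφ_nonneg _)
      have h3 : ∫ y, φ (y - z) ∂volume = I1 := integral_sub_right_eq_self φ z
      have h4 := hqh z
      rw [hh_def] at h4
      linarith
    have hh_int : Integrable h volume := by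
      have hind : Integrable (B.indicator fun _ => (1:ℝ)) volume := by
        rw [integrable_indicator_iff hBm]
        exact integrableOn_const hBlt.ne
      have hφneg : Integrable (fun w => φ (-w)) volume := hφ_int.comp_neg
      have hconv := hind.integrable_convolution (ContinuousLinearMap.mul ℝ ℝ) hφneg
      refine hconv.congr (Eventually.of_forall fun z => ?_)
      rw [convolution_def]
      simp only [ContinuousLinearMap.mul_apply']
      rw [hh_def]
      show ∫ t, B.indicator (fun _ => (1:ℝ)) t * φ (-(z - t)) ∂volume
        = ∫ y in B, φ (y - z) ∂volume
      rw [← integral_indicator hBm]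
      refine integral_congr_ae (Eventually.of_forall fun t => ?_)
      show B.indicator (fun _ => (1:ℝ)) t * φ (-(z - t)) = B.indicator (fun y => φ (y - z)) t
      by_cases ht : t ∈ B
      · rw [Set.indicator_of_mem ht, Set.indicator_of_mem ht, one_mul, neg_sub]
      · rw [Set.indicator_of_notMem ht, Set.indicator_of_notMem ht, zero_mul]
    have hq_int : Integrable q volume :=
      hh_int.mono' hq_sm.aestronglyMeasurable (Eventually.of_forall fun z => by
        rw [Real.norm_of_nonneg (hq_nonneg z)]; exact hqh z)
    have hq_sq_int : Integrable (fun z => q z ^ 2) volume := by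
      have heq2 : (fun z => q z ^ 2) = fun z => q z * q z := by funext z; ring
      rw [heq2]
      refine (hh_int.const_mul I1).mono' (hq_sm.mul hq_sm).aestronglyMeasurable
        (Eventually.of_forall fun z => ?_)
      rw [Real.norm_of_nonneg (mul_nonneg (hq_nonneg z) (hq_nonneg z))]
      exact mul_le_mul (hq_le z) (hqh z) (hq_nonneg z) hI1nn
    -- first Fubini swap
    have hswapA : ∀ x₀ : EuclideanSpace ℝ (Fin d),
        ∫ y in B, k x₀ y ∂volume = ∫ z, k' x₀ z * q z ∂volume := by
      intro x₀
      have h1 : ∫ y in B, k x₀ y ∂volume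
          = ∫ y in B, ∫ z, k' x₀ z * k' z y ∂volume ∂volume :=
        integral_congr_ae (Eventually.of_forall fun y => hk_def x₀ y)
      have h2 : Integrable (fun y => ∫ z, k' x₀ z * k' z y ∂volume) (volume.restrict B) := by
        have heq : (fun y => ∫ z, k' x₀ z * k' z y ∂volume) = k x₀ := by
          funext y; exact (hk_def x₀ y).symm
        rw [heq]
        exact (hk_int x₀).integrableOn
      have hswap := aux_swap (volume.restrict B) volume
        (F := fun y z => k' x₀ z * k' z y)
        (((hk'measx x₀).comp measurable_snd).mul
          (hk'_meas.comp (measurable_snd.prodMk measurable_fst))).aestronglyMeasurable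
        (fun y z => mul_nonneg (hk'_nonneg _ _) (hk'_nonneg _ _))
        (fun y => hint_k' x₀ y) h2
      rw [h1, hswap]
      refine integral_congr_ae (Eventually.of_forall fun z => ?_)
      show ∫ y in B, k' x₀ z * k' z y ∂volume = k' x₀ z * q z
      rw [integral_const_mul, hq_def]
    -- lower bound from the tail estimate
    have hlow1 : ε / 2 ≤ ∫ z, k' (x n) z * q z ∂volume := by
      have hsplit := integral_add_compl hBm (hk_int (x n))
      have h1 := hxε n
      have h2 := htail (x n)
      rw [← hB_def] at h2
      rw [← hswapA (x n)]
      linarith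
    -- Hölder
    have hconj : Real.HolderConjugate 2 2 := Real.HolderConjugate.two_two
    have hk'sq_int : Integrable (fun z => k' (x n) z ^ 2) volume := by
      refine ((hφx (x n)).const_mul M).mono'
        ((hk'measx (x n)).pow_const 2).aestronglyMeasurable
        (Eventually.of_forall fun z => ?_)
      rw [Real.norm_of_nonneg (by positivity)]
      calc k' (x n) z ^ 2 ≤ φ (z - x n) ^ 2 := by
            nlinarith [hk'_dom (x n) z, hk'_nonneg (x n) z, hφ_nonneg (z - x n)]
        _ = φ (z - x n) * φ (z - x n) := sq _
        _ ≤ M * φ (z - x n) := mul_le_mul_of_nonneg_right (hM _) (hφ_nonneg _)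
    have hmem1 : MemLp (fun z => k' (x n) z) (ENNReal.ofReal 2) volume := by
      rw [ENNReal.ofReal_ofNat]
      exact (memLp_two_iff_integrable_sq (hk'measx (x n)).aestronglyMeasurable).2 hk'sq_int
    have hmem2 : MemLp q (ENNReal.ofReal 2) volume := by
      rw [ENNReal.ofReal_ofNat]
      exact (memLp_two_iff_integrable_sq hq_sm.aestronglyMeasurable).2 hq_sq_int
    have hHolder := integral_mul_le_Lp_mul_Lq_of_nonneg hconj
      (Eventually.of_forall (hk'_nonneg (x n))) (Eventually.of_forall hq_nonneg) hmem1 hmem2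
    have hr2 : ∀ t : ℝ, t ^ (2:ℝ) = t ^ 2 := fun t => by
      rw [show (2:ℝ) = ((2:ℕ):ℝ) by norm_num, Real.rpow_natCast]
    simp only [hr2] at hHolder
    have hk'sq_le : ∫ z, k' (x n) z ^ 2 ∂volume ≤ ∫ z, φ z ^ 2 ∂volume := by
      have hφsqx : Integrable (fun z => φ (z - x n) ^ 2) volume :=
        ((measurePreserving_sub_right volume (x n)).integrable_comp
          hφsq_int.aestronglyMeasurable).2 hφsq_int
      have hA : ∫ z, k' (x n) z ^ 2 ∂volume ≤ ∫ z, φ (z - x n) ^ 2 ∂volume :=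
        integral_mono hk'sq_int hφsqx fun z => by
          nlinarith [hk'_dom (x n) z, hk'_nonneg (x n) z, hφ_nonneg (z - x n)]
      have hB2 : ∫ z, φ (z - x n) ^ 2 ∂volume = ∫ z, φ z ^ 2 ∂volume :=
        integral_sub_right_eq_self (fun w => φ w ^ 2) (x n)
      linarith
    have hfac1 : (∫ z, k' (x n) z ^ 2 ∂volume) ^ ((1:ℝ)/2) ≤ C := by
      rw [hC_def, Real.sqrt_eq_rpow]
      exact Real.rpow_le_rpow (integral_nonneg fun z => by positivity) hk'sq_le (by norm_num)
    have hfac2 : (∫ z, q z ^ 2 ∂volume) ^ ((1:ℝ)/2) = Real.sqrt (∫ z, q z ^ 2 ∂volume) :=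
      (Real.sqrt_eq_rpow _).symm
    -- identification of the inner product
    have hcoe := indicatorConstLp_coeFn (p := 2)
      (μ := (volume : Measure (EuclideanSpace ℝ (Fin d)))) (hs := hBmeas n) (hμs := hBfin n)
      (c := (1:ℝ))
    have hT : inner (𝕜 := ℝ) (K (f n)) (f n) = ∫ z, q z ^ 2 ∂volume := by
      have hstep1 : inner (𝕜 := ℝ) (K (f n)) (f n)
          = ∫ x₀ in B, (∫ y in B, k x₀ y ∂volume) ∂volume := by
        rw [hinner_eq, ← integral_indicator hBm]
        refine integral_congr_ae ?_
        filter_upwards [hKrep (f n), hcoe] with x₀ h1 h2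
        have hKval : (∫ y, k x₀ y * (f n) y ∂volume) = ∫ y in B, k x₀ y ∂volume := by
          rw [← integral_indicator hBm]
          refine integral_congr_ae ?_
          filter_upwards [hcoe] with y hy
          rw [hf_def]
          simp only
          rw [hy]
          by_cases hyB : y ∈ B
          · rw [Set.indicator_of_mem hyB, Set.indicator_of_mem hyB, mul_one]
          · rw [Set.indicator_of_notMem hyB, Set.indicator_of_notMem hyB, mul_zero]
        rw [hf_def]
        simp only
        rw [h1, h2, hKval]
        by_cases hxB : x₀ ∈ B
        · rw [Set.indicator_of_mem hxB, Set.indicator_of_mem hxB, mul_one]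
        · rw [Set.indicator_of_notMem hxB, Set.indicator_of_notMem hxB, mul_zero]
      rw [hstep1]
      have hstep2 : ∫ x₀ in B, (∫ y in B, k x₀ y ∂volume) ∂volume
          = ∫ x₀ in B, (∫ z, k' x₀ z * q z ∂volume) ∂volume :=
        integral_congr_ae (Eventually.of_forall fun x₀ => hswapA x₀)
      rw [hstep2]
      have hF1 : ∀ x₀ : EuclideanSpace ℝ (Fin d),
          Integrable (fun z => k' x₀ z * q z) volume := by
        intro x₀
        refine ((hφx x₀).const_mul I1).mono'
          ((hk'measx x₀).mul hq_sm.measurable).aestronglyMeasurable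
          (Eventually.of_forall fun z => ?_)
        rw [Real.norm_of_nonneg (mul_nonneg (hk'_nonneg _ _) (hq_nonneg z))]
        calc k' x₀ z * q z ≤ φ (z - x₀) * I1 :=
              mul_le_mul (hk'_dom _ _) (hq_le z) (hq_nonneg z) (hφ_nonneg _)
          _ = I1 * φ (z - x₀) := mul_comm _ _
      have hF2 : Integrable (fun x₀ => ∫ z, k' x₀ z * q z ∂volume) (volume.restrict B) := by
        have hfuneq : (fun x₀ => ∫ z, k' x₀ z * q z ∂volume)
            = fun x₀ => ∫ y in B, k x₀ y ∂volume := funext fun x₀ => (hswapA x₀).symm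
        rw [hfuneq]
        have hsm2 : StronglyMeasurable (fun x₀ => ∫ y in B, k x₀ y ∂volume) :=
          hkmeas.stronglyMeasurable.integral_prod_right' (ν := volume.restrict B)
        refine Integrable.mono' (show IntegrableOn (fun _ => I2) B volume from
          integrableOn_const hBlt.ne) hsm2.aestronglyMeasurable
          (Eventually.of_forall fun x₀ => ?_)
        rw [Real.norm_of_nonneg (setIntegral_nonneg hBm fun y _ => hk_nonneg _ _)]
        calc ∫ y in B, k x₀ y ∂volume ≤ ∫ y, k x₀ y ∂volume :=
              setIntegral_le_integral (hk_int x₀) (Eventually.of_forall fun y => hk_nonneg _ _)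
          _ ≤ ∫ y, g (y - x₀) ∂volume := integral_mono (hk_int x₀) (hgx x₀) (hkg x₀)
          _ = I2 := integral_sub_right_eq_self g x₀
      have hswapB := aux_swap (volume.restrict B) volume
        (F := fun x₀ z => k' x₀ z * q z)
        (hk'_meas.mul (hq_sm.measurable.comp measurable_snd)).aestronglyMeasurable
        (fun x₀ z => mul_nonneg (hk'_nonneg _ _) (hq_nonneg z)) hF1 hF2
      rw [hswapB]
      refine integral_congr_ae (Eventually.of_forall fun z => ?_)
      show ∫ x₀ in B, k' x₀ z * q z ∂volume = q z ^ 2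
      rw [integral_mul_const]
      have hqsymm : ∫ x₀ in B, k' x₀ z ∂volume = q z := by
        rw [hq_def]
        exact integral_congr_ae (Eventually.of_forall fun x₀ => hk'_symm x₀ z)
      rw [hqsymm, sq]
    constructor
    · calc ε / 2 ≤ ∫ z, k' (x n) z * q z ∂volume := hlow1
        _ ≤ (∫ z, k' (x n) z ^ 2 ∂volume) ^ ((1:ℝ)/2)
            * (∫ z, q z ^ 2 ∂volume) ^ ((1:ℝ)/2) := hHolder
        _ ≤ C * Real.sqrt (∫ z, q z ^ 2 ∂volume) := by
            rw [hfac2]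
            exact mul_le_mul_of_nonneg_right hfac1 (Real.sqrt_nonneg _)
        _ = C * Real.sqrt (inner (𝕜 := ℝ) (K (f n)) (f n)) := by rw [hT]
    · rw [hT]
      exact integral_nonneg fun z => sq_nonneg _
  -- C is positive
  have hC : 0 < C := by
    rcases lt_or_ge 0 C with h | h
    · exact h
    · exfalso
      have h1 := (hmain 0).1
      have h2 : C * Real.sqrt (inner (𝕜 := ℝ) (K (f 0)) (f 0)) ≤ 0 :=
        mul_nonpos_of_nonpos_of_nonneg h (Real.sqrt_nonneg _)
      linarith
  set c0 : ℝ := (ε / (2 * C)) ^ 2 with hc0_def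
  have hc0pos : 0 < c0 := by positivity
  have hlow : ∀ n, c0 ≤ inner (𝕜 := ℝ) (K (f n)) (f n) := by
    intro n
    obtain ⟨h1, h2⟩ := hmain n
    have h3 : ε / (2 * C) ≤ Real.sqrt (inner (𝕜 := ℝ) (K (f n)) (f n)) := by
      rw [div_le_iff₀ (by positivity)]
      nlinarith [Real.sqrt_nonneg (inner (𝕜 := ℝ) (K (f n)) (f n))]
    exact (Real.le_sqrt (by positivity) h2).1 h3
  -- compactness: extract convergent subsequence of K (f n)
  have hballmem : ∀ n, f n ∈ Metric.closedBall
      (0 : Lp ℝ 2 (volume : Measure (EuclideanSpace ℝ (Fin d)))) (Real.sqrt V) := by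
    intro n
    rw [Metric.mem_closedBall, dist_zero_right, hfnorm n]
  have hcl : IsCompact (closure (⇑K '' Metric.closedBall 0 (Real.sqrt V))) :=
    IsCompactOperator.isCompact_closure_image_closedBall (𝕜₁ := ℝ)
      (f := (K : Lp ℝ 2 (volume : Measure (EuclideanSpace ℝ (Fin d))) →ₗ[ℝ]
        Lp ℝ 2 (volume : Measure (EuclideanSpace ℝ (Fin d))))) hKcomp (Real.sqrt V)
  have hmemcl : ∀ n, K (f n) ∈ closure (⇑K '' Metric.closedBall 0 (Real.sqrt V)) := fun n =>
    subset_closure ⟨f n, hballmem n, rfl⟩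
  obtain ⟨a, -, σ, hσmono, hσtend⟩ := hcl.tendsto_subseq hmemcl
  -- Bessel: ⟪a, f n⟫ → 0
  have hbessel : Tendsto (fun n => inner (𝕜 := ℝ) a (f n)) atTop (nhds 0) := by
    have hsum := horth.inner_products_summable a
    have h0 := hsum.tendsto_atTop_zero
    have habs : Tendsto (fun i => ‖inner (𝕜 := ℝ) (e i) a‖) atTop (nhds 0) := by
      have hcont := (Real.continuous_sqrt.tendsto' 0 0 Real.sqrt_zero).comp h0
      refine hcont.congr fun i => ?_
      simp only [Function.comp_apply]
      rw [Real.sqrt_sq (norm_nonneg _)]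
    have hea : Tendsto (fun i => inner (𝕜 := ℝ) (e i) a) atTop (nhds 0) := by
      rw [← tendsto_zero_iff_norm_tendsto_zero] at habs
      exact habs
    have heq : ∀ i, inner (𝕜 := ℝ) a (f i) = Real.sqrt V * inner (𝕜 := ℝ) (e i) a := by
      intro i
      rw [he_def]
      simp only
      rw [real_inner_smul_left, real_inner_comm]
      field_simp
    have := hea.const_mul (Real.sqrt V)
    rw [mul_zero] at this
    exact this.congr fun i => (heq i).symm
  -- final contradiction
  have hfinal : Tendsto (fun j => inner (𝕜 := ℝ) (K (f (σ j))) (f (σ j))) atTop (nhds 0) := by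
    have hpart1 : Tendsto (fun j => inner (𝕜 := ℝ) (K (f (σ j)) - a) (f (σ j))) atTop (nhds 0) := by
      have hnorm : Tendsto (fun j => ‖K (f (σ j)) - a‖ * Real.sqrt V) atTop (nhds 0) := by
        have h1 : Tendsto (fun j => K (f (σ j)) - a) atTop (nhds 0) := by
          have := hσtend.sub (tendsto_const_nhds (x := a))
          rwa [sub_self] at this
        have h2 := h1.norm
        rw [norm_zero] at h2
        have := h2.mul_const (Real.sqrt V)
        rwa [zero_mul] at this
      refine squeeze_zero_norm (fun j => ?_) hnorm
      calc ‖inner (𝕜 := ℝ) (K (f (σ j)) - a) (f (σ j))‖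
          ≤ ‖K (f (σ j)) - a‖ * ‖f (σ j)‖ := norm_inner_le_norm _ _
        _ = ‖K (f (σ j)) - a‖ * Real.sqrt V := by rw [hfnorm]
    have hpart2 : Tendsto (fun j => inner (𝕜 := ℝ) a (f (σ j))) atTop (nhds 0) :=
      hbessel.comp (hσmono.tendsto_atTop)
    have := hpart1.add hpart2
    rw [add_zero] at this
    refine this.congr fun j => ?_
    rw [inner_sub_left]
    ring
  have hle : c0 ≤ 0 := ge_of_tendsto hfinal (Eventually.of_forall fun j => hlow (σ j))
  linarith
end

section
/- Let d ≥ 1 be an integer, α ∈ (0,2), r > 0 and κ ∈ (0,1), and set γ = (1+κ)r/2. There exists a constant C = C(d, α, r, κ) > 0 such that for every x₀ ∈ ℝ^d, every x ∈ B(x₀, κr), and every y ∈ ℝ^d with |y − x₀| > γ, one has (1/(r − γ)) ∫_γ^{min(r, |y−x₀|)} ( (δ² − |x − x₀|²)/(|y − x₀|² − δ²) )^{α/2} |x − y|^{−d} dδ ≤ C |y − x₀|^{−d−α}. -/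
open MeasureTheory

lemma aux_integrable (β a b : ℝ) (hβ1 : β < 1) (hab : a ≤ b) :
    IntegrableOn (fun δ : ℝ => (b - δ) ^ (-β)) (Set.Ioo a b) volume := by
  have h1 : IntervalIntegrable (fun x : ℝ => x ^ (-β)) volume 0 (b - a) :=
    intervalIntegral.intervalIntegrable_rpow' (by linarith)
  have h2 := h1.comp_sub_left b
  simp only [sub_sub_cancel, sub_zero] at h2
  have h3 : IntegrableOn (fun δ : ℝ => (b - δ) ^ (-β)) (Set.Ioc a b) volume :=
    (intervalIntegrable_iff_integrableOn_Ioc_of_le hab).1 h2.symm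
  exact h3.mono_set Set.Ioo_subset_Ioc_self

lemma aux_integral (β a b : ℝ) (hβ1 : β < 1) (hab : a ≤ b) :
    ∫ δ in Set.Ioo a b, (b - δ) ^ (-β) = (b - a) ^ (1 - β) / (1 - β) := by
  rw [← MeasureTheory.integral_Ioc_eq_integral_Ioo, ← intervalIntegral.integral_of_le hab]
  rw [intervalIntegral.integral_comp_sub_left (fun x : ℝ => x ^ (-β)) b]
  rw [sub_self]
  rw [integral_rpow (Or.inl (by linarith : (-1:ℝ) < -β))]
  rw [Real.zero_rpow (by linarith)]
  ring_nf

set_option maxHeartbeats 2000000 in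
/-- Estimate of the averaged Poisson kernel of balls for the symmetric α-stable process
(inside the proof of Lemma 3.2): with `γ = (1+κ)r/2`, for `x ∈ B(x₀, κr)` and
`|y - x₀| > γ`,
`(1/(r-γ)) ∫_γ^{min(r,|y-x₀|)} ((δ² - |x-x₀|²)/(|y-x₀|² - δ²))^{α/2} |x-y|^{-d} dδ
  ≤ C |y-x₀|^{-d-α}`. -/
theorem stmt_7 (d : ℕ) (hd : 1 ≤ d) (α : ℝ) (hα : α ∈ Set.Ioo (0 : ℝ) 2)
    (r κ : ℝ) (hr : 0 < r) (hκ : κ ∈ Set.Ioo (0 : ℝ) 1) :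
    ∃ C : ℝ, 0 < C ∧ ∀ x₀ x y : EuclideanSpace ℝ (Fin d),
      x ∈ Metric.ball x₀ (κ * r) → (1 + κ) * r / 2 < ‖y - x₀‖ →
      (1 / (r - (1 + κ) * r / 2)) *
          ∫ δ in Set.Ioo ((1 + κ) * r / 2) (min r ‖y - x₀‖),
            ((δ ^ 2 - ‖x - x₀‖ ^ 2) / (‖y - x₀‖ ^ 2 - δ ^ 2)) ^ (α / 2) *
              ‖x - y‖ ^ (-(d : ℝ)) ∂volume
        ≤ C * ‖y - x₀‖ ^ (-(d : ℝ) - α) := by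
  obtain ⟨hα0, hα2⟩ := hα
  obtain ⟨hκ0, hκ1⟩ := hκ
  set γ : ℝ := (1 + κ) * r / 2 with hγdef
  have hγ0 : 0 < γ := by rw [hγdef]; nlinarith
  have hκrγ : κ * r < γ := by rw [hγdef]; nlinarith
  have hγr : γ < r := by rw [hγdef]; nlinarith
  have hαh : 0 < 1 - α / 2 := by linarith
  set c₁ : ℝ := (r ^ 2 / (2 * γ)) ^ (α / 2) * ((1 - κ) * r / 2) ^ (-(d : ℝ)) with hc₁
  have h1κ : 0 < (1 - κ) * r / 2 := by nlinarith
  have hc₁0 : 0 < c₁ := by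
    apply mul_pos (Real.rpow_pos_of_pos (by positivity) _) (Real.rpow_pos_of_pos h1κ _)
  set K : ℝ := c₁ * ((r - γ) ^ (1 - α / 2) / (1 - α / 2)) / (r - γ) with hK
  have hrγ : 0 < r - γ := by linarith
  have hK0 : 0 < K := by
    apply div_pos (mul_pos hc₁0 (div_pos (Real.rpow_pos_of_pos hrγ _) hαh)) hrγ
  set C₁ : ℝ := K * (2 * r) ^ ((d : ℝ) + α) with hC₁
  set C₂ : ℝ := (4 * r ^ 2 / 3) ^ (α / 2) * 2 ^ (d : ℝ) with hC₂
  have hC₁0 : 0 < C₁ := mul_pos hK0 (Real.rpow_pos_of_pos (by linarith) _)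
  have hC₂0 : 0 < C₂ :=
    mul_pos (Real.rpow_pos_of_pos (by positivity) _) (Real.rpow_pos_of_pos (by norm_num) _)
  refine ⟨max C₁ C₂, lt_max_of_lt_left hC₁0, ?_⟩
  intro x₀ x y hx hy
  set ρ : ℝ := ‖y - x₀‖ with hρdef
  set s : ℝ := ‖x - x₀‖ with hsdef
  have hs_lt : s < κ * r := by
    have := Metric.mem_ball.1 hx; rwa [dist_eq_norm] at this
  have hs0 : 0 ≤ s := norm_nonneg _
  have hργ : γ < ρ := hy
  have hρ0 : 0 < ρ := hγ0.trans hργ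
  set m : ℝ := min r ρ with hm
  have hmγ : γ < m := lt_min hγr hργ
  have hmr : m ≤ r := min_le_left _ _
  have hmρ : m ≤ ρ := min_le_right _ _
  have hxy : ρ - s ≤ ‖x - y‖ := by
    have h := norm_sub_norm_le (y - x₀) (x - x₀)
    rw [sub_sub_sub_cancel_right, norm_sub_rev y x] at h
    rw [hρdef, hsdef]
    exact h
  have hxyl : (1 - κ) * r / 2 ≤ ‖x - y‖ := by
    refine le_trans ?_ hxy
    rw [hγdef] at hργ
    linarith
  have hxy0 : 0 < ‖x - y‖ := lt_of_lt_of_le h1κ hxyl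
  have hρe : 0 ≤ ρ ^ (-(d : ℝ) - α) := Real.rpow_nonneg hρ0.le _
  -- nonnegativity of the integrand on the domain
  have hnum_pos : ∀ δ ∈ Set.Ioo γ m, 0 < δ ^ 2 - s ^ 2 := by
    intro δ hδ
    have hsδ : s < δ := (hs_lt.trans hκrγ).trans hδ.1
    have h2 : s ^ 2 < δ ^ 2 := sq_lt_sq' (by linarith) hsδ
    linarith
  have hden_pos : ∀ δ ∈ Set.Ioo γ m, 0 < ρ ^ 2 - δ ^ 2 := by
    intro δ hδ
    have h1 : δ < ρ := lt_of_lt_of_le hδ.2 hmρ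
    have h2 : 0 < δ := hγ0.trans hδ.1
    nlinarith
  have hnn : ∀ δ ∈ Set.Ioo γ m,
      0 ≤ ((δ ^ 2 - s ^ 2) / (ρ ^ 2 - δ ^ 2)) ^ (α / 2) * ‖x - y‖ ^ (-(d : ℝ)) := by
    intro δ hδ
    have h1 := hnum_pos δ hδ
    have h2 := hden_pos δ hδ
    positivity
  rcases le_or_gt ρ (2 * r) with hcase | hcase
  · -- Case A : γ < ρ ≤ 2r
    have hbound : ∀ δ ∈ Set.Ioo γ m,
        ((δ ^ 2 - s ^ 2) / (ρ ^ 2 - δ ^ 2)) ^ (α / 2) * ‖x - y‖ ^ (-(d : ℝ))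
          ≤ c₁ * (m - δ) ^ (-(α / 2)) := by
      intro δ hδ
      obtain ⟨hδ1, hδ2⟩ := hδ
      have hδ0 : 0 < δ := hγ0.trans hδ1
      have hδr : δ < r := lt_of_lt_of_le hδ2 hmr
      have hnum : δ ^ 2 - s ^ 2 ≤ r ^ 2 := by nlinarith
      have hdpos : 0 < 2 * γ * (m - δ) := by nlinarith
      have hden : 2 * γ * (m - δ) ≤ ρ ^ 2 - δ ^ 2 := by
        nlinarith [mul_nonneg (sub_nonneg.2 hmρ) (by positivity : (0:ℝ) ≤ ρ + δ),
          mul_nonneg (le_of_lt (sub_pos.2 hδ2)) (by linarith : (0:ℝ) ≤ ρ + δ - 2 * γ)]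
      have hratio : (δ ^ 2 - s ^ 2) / (ρ ^ 2 - δ ^ 2) ≤ r ^ 2 / (2 * γ * (m - δ)) :=
        div_le_div₀ (by positivity) hnum hdpos hden
      have h1 : ((δ ^ 2 - s ^ 2) / (ρ ^ 2 - δ ^ 2)) ^ (α / 2)
          ≤ (r ^ 2 / (2 * γ * (m - δ))) ^ (α / 2) := by
        apply Real.rpow_le_rpow _ hratio (by linarith)
        exact div_nonneg (hnum_pos δ ⟨hδ1, hδ2⟩).le (hden_pos δ ⟨hδ1, hδ2⟩).le
      have h2 : (r ^ 2 / (2 * γ * (m - δ))) ^ (α / 2)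
          = (r ^ 2 / (2 * γ)) ^ (α / 2) * (m - δ) ^ (-(α / 2)) := by
        rw [div_mul_eq_div_div, div_eq_mul_inv (r ^ 2 / (2 * γ)),
          Real.mul_rpow (by positivity) (inv_nonneg.2 (by linarith)),
          Real.inv_rpow (by linarith : (0:ℝ) ≤ m - δ), ← Real.rpow_neg (by linarith)]
      have h3 : ‖x - y‖ ^ (-(d : ℝ)) ≤ ((1 - κ) * r / 2) ^ (-(d : ℝ)) :=
        Real.rpow_le_rpow_of_nonpos h1κ hxyl (neg_nonpos.2 (Nat.cast_nonneg d))
      calc ((δ ^ 2 - s ^ 2) / (ρ ^ 2 - δ ^ 2)) ^ (α / 2) * ‖x - y‖ ^ (-(d : ℝ))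
          ≤ ((r ^ 2 / (2 * γ)) ^ (α / 2) * (m - δ) ^ (-(α / 2)))
            * ((1 - κ) * r / 2) ^ (-(d : ℝ)) := by
            exact mul_le_mul (h2 ▸ h1) h3 (Real.rpow_nonneg (norm_nonneg _) _)
              (mul_nonneg (Real.rpow_nonneg (by positivity) _)
                (Real.rpow_nonneg (by linarith) _))
        _ = c₁ * (m - δ) ^ (-(α / 2)) := by rw [hc₁]; ring
    have hInt : (∫ δ in Set.Ioo γ m,
        ((δ ^ 2 - s ^ 2) / (ρ ^ 2 - δ ^ 2)) ^ (α / 2) * ‖x - y‖ ^ (-(d : ℝ)))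
        ≤ ∫ δ in Set.Ioo γ m, c₁ * (m - δ) ^ (-(α / 2)) := by
      apply integral_mono_of_nonneg
      · filter_upwards [ae_restrict_mem measurableSet_Ioo] with δ hδ using hnn δ hδ
      · exact (aux_integrable (α / 2) γ m (by linarith) hmγ.le).const_mul c₁
      · filter_upwards [ae_restrict_mem measurableSet_Ioo] with δ hδ using hbound δ hδ
    have hval : (∫ δ in Set.Ioo γ m, c₁ * (m - δ) ^ (-(α / 2)))
        = c₁ * ((m - γ) ^ (1 - α / 2) / (1 - α / 2)) := by
      rw [integral_const_mul, aux_integral (α / 2) γ m (by linarith) hmγ.le]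
    have hmono : (m - γ) ^ (1 - α / 2) ≤ (r - γ) ^ (1 - α / 2) :=
      Real.rpow_le_rpow (by linarith) (by linarith) (by linarith)
    have hKle : (1 / (r - γ)) *
        (∫ δ in Set.Ioo γ m,
          ((δ ^ 2 - s ^ 2) / (ρ ^ 2 - δ ^ 2)) ^ (α / 2) * ‖x - y‖ ^ (-(d : ℝ))) ≤ K := by
      rw [hK]
      have h4 : (∫ δ in Set.Ioo γ m,
          ((δ ^ 2 - s ^ 2) / (ρ ^ 2 - δ ^ 2)) ^ (α / 2) * ‖x - y‖ ^ (-(d : ℝ)))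
          ≤ c₁ * ((r - γ) ^ (1 - α / 2) / (1 - α / 2)) := by
        refine hInt.trans (hval.le.trans ?_)
        gcongr
      calc (1 / (r - γ)) * _ ≤ (1 / (r - γ)) * (c₁ * ((r - γ) ^ (1 - α / 2) / (1 - α / 2))) :=
            mul_le_mul_of_nonneg_left h4 (by positivity)
        _ = c₁ * ((r - γ) ^ (1 - α / 2) / (1 - α / 2)) / (r - γ) := by ring
    have hKC : K ≤ C₁ * ρ ^ (-(d : ℝ) - α) := by
      have hpow : (2 * r) ^ (-(d : ℝ) - α) ≤ ρ ^ (-(d : ℝ) - α) :=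
        Real.rpow_le_rpow_of_nonpos hρ0 hcase
          (by have h0 : (0:ℝ) ≤ (d:ℝ) := Nat.cast_nonneg d; linarith)
      calc K = K * ((2 * r) ^ ((d : ℝ) + α) * (2 * r) ^ (-(d : ℝ) - α)) := by
            rw [← Real.rpow_add (by linarith : (0:ℝ) < 2 * r),
              show ((d : ℝ) + α) + (-(d : ℝ) - α) = 0 by ring, Real.rpow_zero, mul_one]
        _ = C₁ * (2 * r) ^ (-(d : ℝ) - α) := by rw [hC₁]; ring
        _ ≤ C₁ * ρ ^ (-(d : ℝ) - α) := mul_le_mul_of_nonneg_left hpow hC₁0.le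
    calc (1 / (r - γ)) * _ ≤ K := hKle
      _ ≤ C₁ * ρ ^ (-(d : ℝ) - α) := hKC
      _ ≤ max C₁ C₂ * ρ ^ (-(d : ℝ) - α) :=
          mul_le_mul_of_nonneg_right (le_max_left _ _) hρe
  · -- Case B : ρ > 2r
    have hmr' : m = r := min_eq_left (by linarith)
    have hbound : ∀ δ ∈ Set.Ioo γ m,
        ((δ ^ 2 - s ^ 2) / (ρ ^ 2 - δ ^ 2)) ^ (α / 2) * ‖x - y‖ ^ (-(d : ℝ))
          ≤ C₂ * ρ ^ (-(d : ℝ) - α) := by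
      intro δ hδ
      obtain ⟨hδ1, hδ2⟩ := hδ
      have hδ0 : 0 < δ := hγ0.trans hδ1
      have hδr : δ < r := lt_of_lt_of_le hδ2 hmr
      have hδsq : δ ^ 2 < r ^ 2 := by nlinarith
      have hq : δ ^ 2 < ρ ^ 2 / 4 := by nlinarith
      have hratio : (δ ^ 2 - s ^ 2) / (ρ ^ 2 - δ ^ 2) ≤ (4 * r ^ 2 / 3) / ρ ^ 2 := by
        rw [div_le_div_iff₀ (hden_pos δ ⟨hδ1, hδ2⟩) (by positivity)]
        nlinarith [mul_le_mul_of_nonneg_right hδsq.le (sq_nonneg ρ),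
          mul_le_mul_of_nonneg_left hq.le (by positivity : (0:ℝ) ≤ 4 * r ^ 2 / 3),
          mul_nonneg (sq_nonneg s) (sq_nonneg ρ)]
      have h1 : ((δ ^ 2 - s ^ 2) / (ρ ^ 2 - δ ^ 2)) ^ (α / 2)
          ≤ ((4 * r ^ 2 / 3) / ρ ^ 2) ^ (α / 2) := by
        apply Real.rpow_le_rpow _ hratio (by linarith)
        exact div_nonneg (hnum_pos δ ⟨hδ1, hδ2⟩).le (hden_pos δ ⟨hδ1, hδ2⟩).le
      have h2 : ((4 * r ^ 2 / 3) / ρ ^ 2) ^ (α / 2)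
          = (4 * r ^ 2 / 3) ^ (α / 2) * ρ ^ (-α) := by
        rw [Real.div_rpow (by positivity) (sq_nonneg ρ), ← Real.rpow_natCast ρ 2,
          ← Real.rpow_mul hρ0.le, show ((2:ℕ):ℝ) * (α / 2) = α by push_cast; ring,
          Real.rpow_neg hρ0.le, div_eq_mul_inv]
      have hxy2 : ρ / 2 ≤ ‖x - y‖ := by
        refine le_trans ?_ hxy
        have : s < r := by nlinarith
        linarith
      have h3 : ‖x - y‖ ^ (-(d : ℝ)) ≤ (ρ / 2) ^ (-(d : ℝ)) :=
        Real.rpow_le_rpow_of_nonpos (by positivity) hxy2 (neg_nonpos.2 (Nat.cast_nonneg d))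
      have h4 : (ρ / 2) ^ (-(d : ℝ)) = 2 ^ (d : ℝ) * ρ ^ (-(d : ℝ)) := by
        rw [Real.div_rpow hρ0.le (by norm_num : (0:ℝ) ≤ 2),
          Real.rpow_neg (by norm_num : (0:ℝ) ≤ 2), div_eq_mul_inv, inv_inv, mul_comm]
      calc ((δ ^ 2 - s ^ 2) / (ρ ^ 2 - δ ^ 2)) ^ (α / 2) * ‖x - y‖ ^ (-(d : ℝ))
          ≤ ((4 * r ^ 2 / 3) ^ (α / 2) * ρ ^ (-α)) * (2 ^ (d : ℝ) * ρ ^ (-(d : ℝ))) := by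
            apply mul_le_mul (h2 ▸ h1) (h4 ▸ h3) (Real.rpow_nonneg (norm_nonneg _) _)
              (by positivity)
        _ = C₂ * (ρ ^ (-α) * ρ ^ (-(d : ℝ))) := by rw [hC₂]; ring
        _ = C₂ * ρ ^ (-(d : ℝ) - α) := by
            rw [← Real.rpow_add hρ0, show -α + -(d : ℝ) = -(d : ℝ) - α by ring]
    have hInt : (∫ δ in Set.Ioo γ m,
        ((δ ^ 2 - s ^ 2) / (ρ ^ 2 - δ ^ 2)) ^ (α / 2) * ‖x - y‖ ^ (-(d : ℝ)))
        ≤ ∫ δ in Set.Ioo γ m, C₂ * ρ ^ (-(d : ℝ) - α) := by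
      apply integral_mono_of_nonneg
      · filter_upwards [ae_restrict_mem measurableSet_Ioo] with δ hδ using hnn δ hδ
      · exact integrableOn_const measure_Ioo_lt_top.ne
      · filter_upwards [ae_restrict_mem measurableSet_Ioo] with δ hδ using hbound δ hδ
    have hval : (∫ δ in Set.Ioo γ m, C₂ * ρ ^ (-(d : ℝ) - α))
        = (r - γ) * (C₂ * ρ ^ (-(d : ℝ) - α)) := by
      rw [setIntegral_const, Real.volume_real_Ioo_of_le hmγ.le, hmr',
        smul_eq_mul]
    calc (1 / (r - γ)) * _ ≤ (1 / (r - γ)) * ((r - γ) * (C₂ * ρ ^ (-(d : ℝ) - α))) := by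
          apply mul_le_mul_of_nonneg_left (hInt.trans hval.le) (by positivity)
      _ = C₂ * ρ ^ (-(d : ℝ) - α) := by
          rw [← mul_assoc, one_div_mul_cancel (ne_of_gt hrγ), one_mul]
      _ ≤ max C₁ C₂ * ρ ^ (-(d : ℝ) - α) :=
          mul_le_mul_of_nonneg_right (le_max_right _ _) hρe
end
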